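/- arXiv:2110.07346 — 4 statements merged into one kernel-verified Lean document; each statement's English description precedes it below -/
import Mathlib

section
/- Positional determinacy of mean-payoff games: for every game G = (V, E, w, V_Min, V_Max) with integer weights, there exist a strategy σ₀ for Min and a strategy τ₀ for Max such that for every vertex v ∈ V, sup over infinite paths π from v consistent with σ₀ of MP(w(π)) = inf over Min strategies σ of sup over infinite paths π from v consistent with σ of MP(w(π)) = sup over Max strategies τ of inf over infinite paths π from v consistent with τ of MP(w(π)) = inf over infinite paths π from v consistent with τ₀ of MP(w(π)). -/
attribute [local instance] Classical.propDecidable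

/-- A game: a directed graph `E` on vertex set `V` with no sink, edge weights `wt : V → V → R`,
and a partition of the vertices into those belonging to Min (`isMin`) and to Max (the rest). -/
structure Game (V : Type) (R : Type) where
  E : V → V → Prop
  wt : V → V → R
  isMin : V → Prop
  nosink : ∀ v, ∃ u, E v u

namespace Game

variable {V : Type} {R : Type}

/-- A strategy for Min: a choice of an outgoing edge at every Min vertex. -/
def MinStrat (G : Game V R) : Type := {σ : V → V // ∀ v, G.isMin v → G.E v (σ v)}

/-- A strategy for Max: a choice of an outgoing edge at every Max vertex. -/
def MaxStrat (G : Game V R) : Type := {τ : V → V // ∀ v, ¬ G.isMin v → G.E v (τ v)}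

/-- An infinite path in the graph. -/
def IsPath (G : Game V R) (π : ℕ → V) : Prop := ∀ i, G.E (π i) (π (i + 1))

/-- Consistency of an infinite path with a Min strategy. -/
def ConsMin (G : Game V R) (σ : G.MinStrat) (π : ℕ → V) : Prop :=
  ∀ i, G.isMin (π i) → π (i + 1) = σ.1 (π i)

/-- Consistency of an infinite path with a Max strategy. -/
def ConsMax (G : Game V R) (τ : G.MaxStrat) (π : ℕ → V) : Prop :=
  ∀ i, ¬ G.isMin (π i) → π (i + 1) = τ.1 (π i)

/-- Infinite paths starting in `v` consistent with the Min strategy `σ`. -/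
def PlaysMin (G : Game V R) (σ : G.MinStrat) (v : V) : Type :=
  {π : ℕ → V // π 0 = v ∧ G.IsPath π ∧ G.ConsMin σ π}

/-- Infinite paths starting in `v` consistent with the Max strategy `τ`. -/
def PlaysMax (G : Game V R) (τ : G.MaxStrat) (v : V) : Type :=
  {π : ℕ → V // π 0 = v ∧ G.IsPath π ∧ G.ConsMax τ π}

/-- The sequence of weights along an infinite path. -/
def wseq (G : Game V R) (π : ℕ → V) : ℕ → R := fun i => G.wt (π i) (π (i + 1))

/-- Embedding of `ℤ ∪ {∞}` into the extended reals. -/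
noncomputable def toE (x : WithTop ℤ) : EReal :=
  if h : x = ⊤ then ⊤ else (((x.untop h : ℤ) : ℝ) : EReal)

/-- Embedding of `ℕ ∪ {∞}` into the extended reals. -/
noncomputable def enatToE (x : ENat) : EReal :=
  if x = ⊤ then ⊤ else ((x.toNat : ℝ) : EReal)

/-- Conversion `ℤ ∪ {∞} → ℕ ∪ {∞}` (exact on non-negative values). -/
noncomputable def wToN (x : WithTop ℤ) : ENat :=
  if h : x = ⊤ then ⊤ else ((x.untop h).toNat : ENat)

/-- The mean-payoff valuation `MP(w₀w₁⋯) = limsup_k (1/k) ∑_{i<k} w_i`. -/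
noncomputable def MPv (w : ℕ → ℤ) : EReal :=
  Filter.limsup
    (fun k : ℕ => ((((∑ i ∈ Finset.range k, w i : ℤ) : ℝ) / (k : ℝ) : ℝ) : EReal))
    Filter.atTop

/-- The energy valuation `En(w₀w₁⋯) = sup_k ∑_{i<k} w_i` (weights given in `EReal`). -/
noncomputable def En (w : ℕ → EReal) : EReal :=
  ⨆ k : ℕ, ∑ i ∈ Finset.range k, w i

/-- The positive-energy valuation `En⁺(w₀w₁⋯) = ∑_{i<k¬} w_i ∈ ℕ ∪ {∞}` where `k¬` is the
first index of a negative weight (the whole, possibly infinite, sum if no weight is negative). -/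
noncomputable def EnP (w : ℕ → WithTop ℤ) : ENat :=
  if h : ∃ k, w k < 0 then ∑ i ∈ Finset.range (Nat.find h), wToN (w i)
  else ⨆ k : ℕ, ∑ i ∈ Finset.range k, wToN (w i)

/-- The mean-payoff value of a vertex:
`MP_G(v) = inf over Min strategies σ of sup over plays π from v consistent with σ of MP(w(π))`. -/
noncomputable def MPVal (G : Game V ℤ) (v : V) : EReal :=
  ⨅ σ : G.MinStrat, ⨆ π : G.PlaysMin σ v, MPv (G.wseq π.1)

/-- The energy value of a vertex. -/
noncomputable def EnVal (G : Game V (WithTop ℤ)) (v : V) : EReal :=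
  ⨅ σ : G.MinStrat, ⨆ π : G.PlaysMin σ v, En (fun i => toE (G.wseq π.1 i))

/-- The positive-energy value of a vertex. -/
noncomputable def EnPVal (G : Game V (WithTop ℤ)) (v : V) : ENat :=
  ⨅ σ : G.MinStrat, ⨆ π : G.PlaysMin σ v, EnP (G.wseq π.1)

/-- Lift a game with integer weights to a game with weights in `ℤ ∪ {∞}`. -/
def liftZ (G : Game V ℤ) : Game V (WithTop ℤ) :=
  { E := G.E, wt := fun u v => (G.wt u v : WithTop ℤ), isMin := G.isMin, nosink := G.nosink }

/-- The `φ`-modified weight: `w_φ(v,v') = w(v,v') + φ(v') − φ(v)` when `w(v,v')`, `φ(v)`, `φ(v')`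
are all finite, and `∞` otherwise. -/
noncomputable def modWt (w : V → V → WithTop ℤ) (φ : V → ENat) (u v : V) : WithTop ℤ :=
  if w u v = ⊤ ∨ φ u = ⊤ ∨ φ v = ⊤ then ⊤
  else (((w u v).untopD 0 + ((φ v).toNat : ℤ) - ((φ u).toNat : ℤ) : ℤ) : WithTop ℤ)

/-- The `φ`-modified game `G_φ`. -/
noncomputable def modify (G : Game V (WithTop ℤ)) (φ : V → ENat) : Game V (WithTop ℤ) :=
  { G with wt := modWt G.wt φ }

/-- `π 0 → π 1 → ⋯ → π k` is a simple cycle: `k ≥ 1`, consecutive edges, `π k = π 0`,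
and `π 0, …, π (k-1)` pairwise distinct. -/
def IsSimpleCycle (G : Game V R) (π : ℕ → V) (k : ℕ) : Prop :=
  1 ≤ k ∧ (∀ i < k, G.E (π i) (π (i + 1))) ∧ π k = π 0 ∧
    ∀ i < k, ∀ j < k, π i = π j → i = j

/-- A game is simple if every simple cycle has nonzero sum of weights. -/
def IsSimpleR [AddCommMonoid R] (G : Game V R) : Prop :=
  ∀ π k, IsSimpleCycle G π k → (∑ i ∈ Finset.range k, G.wt (π i) (π (i + 1))) ≠ 0

/-- `W = max_{e ∈ E} |w(e)|`. -/
noncomputable def maxW (G : Game V ℤ) [Fintype V] : ℕ :=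
  Finset.sup Finset.univ (fun p : V × V => if G.E p.1 p.2 then (G.wt p.1 p.2).natAbs else 0)

/-- The ESL iteration: `G₀ = G` and `G_{j+1} = (G_j)_{φ_j}` where `φ_j = En⁺_{G_j}`. -/
noncomputable def esl (G : Game V (WithTop ℤ)) : ℕ → Game V (WithTop ℤ)
  | 0 => G
  | j + 1 => modify (esl G j) (EnPVal (esl G j))

/-- The accumulated ESL potential `Φ_j = φ₀ + ⋯ + φ_{j−1}`. -/
noncomputable def eslPhi (G : Game V (WithTop ℤ)) (j : ℕ) (v : V) : ENat :=
  ∑ i ∈ Finset.range j, EnPVal (esl G i) v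

/-- The set of vertices from which Min can ensure to immediately visit a negative-weight edge:
Min vertices with some negative outgoing edge, and Max vertices all of whose outgoing edges
are negative. -/
def NegSet (G : Game V (WithTop ℤ)) : Set V :=
  {v | (G.isMin v ∧ ∃ u, G.E v u ∧ G.wt v u < 0) ∨
       (¬ G.isMin v ∧ ∀ u, G.E v u → G.wt v u < 0)}

end Game

open Game


open Filter

section Aux
variable {ι : Type*}

lemma abs_inf'_sub {s : Finset ι} (hs : s.Nonempty) (f g : ι → ℝ) {c : ℝ}
    (h : ∀ u ∈ s, |f u - g u| ≤ c) : |s.inf' hs f - s.inf' hs g| ≤ c := by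
  obtain ⟨a, ha, hfa⟩ := Finset.exists_mem_eq_inf' hs f
  obtain ⟨b, hb, hgb⟩ := Finset.exists_mem_eq_inf' hs g
  have h1 : s.inf' hs f ≤ f b := Finset.inf'_le _ hb
  have h2 : s.inf' hs g ≤ g a := Finset.inf'_le _ ha
  have hb' := abs_le.1 (h b hb)
  have ha' := abs_le.1 (h a ha)
  rw [abs_le]
  constructor <;> [linarith [hfa, hgb]; linarith [hfa, hgb]]

lemma abs_sup'_sub {s : Finset ι} (hs : s.Nonempty) (f g : ι → ℝ) {c : ℝ}
    (h : ∀ u ∈ s, |f u - g u| ≤ c) : |s.sup' hs f - s.sup' hs g| ≤ c := by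
  obtain ⟨a, ha, hfa⟩ := Finset.exists_mem_eq_sup' hs f
  obtain ⟨b, hb, hgb⟩ := Finset.exists_mem_eq_sup' hs g
  have h1 : f b ≤ s.sup' hs f := Finset.le_sup' _ hb
  have h2 : g a ≤ s.sup' hs g := Finset.le_sup' _ ha
  have hb' := abs_le.1 (h b hb)
  have ha' := abs_le.1 (h a ha)
  rw [abs_le]
  constructor <;> [linarith [hfa, hgb]; linarith [hfa, hgb]]

end Aux
-- infra part
open Filter

namespace MPAux

variable {V : Type} [Fintype V]

noncomputable def succs (G : Game V ℤ) (v : V) : Finset V :=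
  Finset.univ.filter (fun u => G.E v u)

lemma succs_nonempty (G : Game V ℤ) (v : V) : (succs G v).Nonempty := by
  obtain ⟨u, hu⟩ := G.nosink v
  exact ⟨u, by simp [succs, hu]⟩

lemma mem_succs {G : Game V ℤ} {v u : V} : u ∈ succs G v ↔ G.E v u := by simp [succs]

noncomputable def Wb (G : Game V ℤ) : ℝ := (G.maxW : ℝ)

lemma Wb_nonneg (G : Game V ℤ) : 0 ≤ Wb G := Nat.cast_nonneg _

lemma abs_wt_le {G : Game V ℤ} {u v : V} (h : G.E u v) : |((G.wt u v : ℝ))| ≤ Wb G := by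
  have h1 : (G.wt u v).natAbs ≤ G.maxW := by
    have := Finset.le_sup (s := Finset.univ)
      (f := fun p : V × V => if G.E p.1 p.2 then (G.wt p.1 p.2).natAbs else 0)
      (Finset.mem_univ (u, v))
    simpa [Game.maxW, h] using this
  calc |((G.wt u v : ℝ))| = ((G.wt u v).natAbs : ℝ) := by simp [Nat.cast_natAbs, Int.cast_abs]
    _ ≤ (G.maxW : ℝ) := by exact_mod_cast h1

/-- The discounted Bellman operator. -/
noncomputable def bell (G : Game V ℤ) (l : ℝ) (f : V → ℝ) : V → ℝ := fun v =>
  if G.isMin v then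
    (succs G v).inf' (succs_nonempty G v) (fun u => ((G.wt v u : ℝ)) + l * f u)
  else
    (succs G v).sup' (succs_nonempty G v) (fun u => ((G.wt v u : ℝ)) + l * f u)

lemma bell_contract (G : Game V ℤ) {l : ℝ} (h0 : 0 ≤ l) (h1 : l < 1) :
    ContractingWith ⟨l, h0⟩ (bell G l) := by
  constructor
  · exact_mod_cast h1
  · refine lipschitzWith_iff_dist_le_mul.2 ?_
    intro f g
    show dist (bell G l f) (bell G l g) ≤ l * dist f g
    have hc : 0 ≤ l * dist f g := mul_nonneg h0 dist_nonneg
    rw [dist_pi_le_iff hc]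
    intro v
    have key : ∀ u ∈ succs G v,
        |(((G.wt v u : ℝ)) + l * f u) - (((G.wt v u : ℝ)) + l * g u)| ≤ l * dist f g := by
      intro u _
      have hfg : |f u - g u| ≤ dist f g := by
        have := dist_le_pi_dist f g u
        simpa [Real.dist_eq] using this
      have : |(((G.wt v u : ℝ)) + l * f u) - (((G.wt v u : ℝ)) + l * g u)| = l * |f u - g u| := by
        rw [show (((G.wt v u : ℝ)) + l * f u) - (((G.wt v u : ℝ)) + l * g u) = l * (f u - g u) by ring,
          abs_mul, abs_of_nonneg h0]
      rw [this]
      exact mul_le_mul_of_nonneg_left hfg h0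
    by_cases hv : G.isMin v
    · simpa [bell, hv, Real.dist_eq] using abs_inf'_sub (succs_nonempty G v) _ _ key
    · simpa [bell, hv, Real.dist_eq] using abs_sup'_sub (succs_nonempty G v) _ _ key

lemma exists_dval (G : Game V ℤ) {l : ℝ} (h0 : 0 ≤ l) (h1 : l < 1) :
    ∃ f : V → ℝ, bell G l f = f :=
  ⟨_, (bell_contract G h0 h1).fixedPoint_isFixedPt⟩

section fixedpt

variable {G : Game V ℤ} {l : ℝ} {f : V → ℝ}

lemma bell_min_le (hfix : bell G l f = f) {v u : V} (hv : G.isMin v) (hu : G.E v u) :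
    f v ≤ ((G.wt v u : ℝ)) + l * f u := by
  conv_lhs => rw [← hfix]
  simp only [bell, if_pos hv]
  exact Finset.inf'_le (fun u => ((G.wt v u : ℝ)) + l * f u) (mem_succs.2 hu)

lemma bell_max_ge (hfix : bell G l f = f) {v u : V} (hv : ¬ G.isMin v) (hu : G.E v u) :
    ((G.wt v u : ℝ)) + l * f u ≤ f v := by
  conv_rhs => rw [← hfix]
  simp only [bell, if_neg hv]
  exact Finset.le_sup' (fun u => ((G.wt v u : ℝ)) + l * f u) (mem_succs.2 hu)

lemma bell_min_ach (hfix : bell G l f = f) {v : V} (hv : G.isMin v) :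
    ∃ u, G.E v u ∧ f v = ((G.wt v u : ℝ)) + l * f u := by
  obtain ⟨u, hu, h⟩ := Finset.exists_mem_eq_inf' (succs_nonempty G v)
    (fun u => ((G.wt v u : ℝ)) + l * f u)
  refine ⟨u, mem_succs.1 hu, ?_⟩
  conv_lhs => rw [← hfix]
  simpa [bell, if_pos hv] using h

lemma bell_max_ach (hfix : bell G l f = f) {v : V} (hv : ¬ G.isMin v) :
    ∃ u, G.E v u ∧ f v = ((G.wt v u : ℝ)) + l * f u := by
  obtain ⟨u, hu, h⟩ := Finset.exists_mem_eq_sup' (succs_nonempty G v)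
    (fun u => ((G.wt v u : ℝ)) + l * f u)
  refine ⟨u, mem_succs.1 hu, ?_⟩
  conv_lhs => rw [← hfix]
  simpa [bell, if_neg hv] using h

lemma bell_ach (hfix : bell G l f = f) (v : V) :
    ∃ u, G.E v u ∧ f v = ((G.wt v u : ℝ)) + l * f u := by
  by_cases hv : G.isMin v
  · exact bell_min_ach hfix hv
  · exact bell_max_ach hfix hv

lemma abs_apply_le_dist_zero (f : V → ℝ) (v : V) : |f v| ≤ dist f 0 := by
  have := dist_le_pi_dist f (0 : V → ℝ) v
  simpa [Real.dist_eq] using this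

lemma dval_bound (hfix : bell G l f = f) (h0 : 0 ≤ l) (h1 : l < 1) :
    (1 - l) * dist f 0 ≤ Wb G := by
  have key : dist f 0 ≤ Wb G + l * dist f 0 := by
    rw [dist_pi_le_iff (add_nonneg (Wb_nonneg G) (mul_nonneg h0 dist_nonneg))]
    intro v
    obtain ⟨u, hu, hach⟩ := bell_ach hfix v
    have h2 : |f u| ≤ dist f 0 := abs_apply_le_dist_zero f u
    have h3 := abs_wt_le hu
    have : |f v| ≤ Wb G + l * dist f 0 := by
      rw [hach]
      calc |((G.wt v u : ℝ)) + l * f u| ≤ |((G.wt v u : ℝ))| + |l * f u| := abs_add_le _ _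
        _ ≤ Wb G + l * dist f 0 := by
            rw [abs_mul, abs_of_nonneg h0]
            exact add_le_add h3 (mul_le_mul_of_nonneg_left h2 h0)
    simpa [Real.dist_eq] using this
  linarith

end fixedpt

end MPAux
namespace MPAux

lemma sum_estimate {l D M : ℝ} {w : ℕ → ℤ} {fx : ℕ → ℝ}
    (hstep : ∀ i, (w i : ℝ) ≤ fx i - l * fx (i + 1))
    (hterm : ∀ i, (1 - l) * fx (i + 1) ≤ M)
    (hD : ∀ i, |fx i| ≤ D) (K : ℕ) :
    ((∑ i ∈ Finset.range K, w i : ℤ) : ℝ) ≤ 2 * D + K * M := by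
  have h1 : (∑ i ∈ Finset.range K, (w i : ℝ)) ≤
      ∑ i ∈ Finset.range K, (fx i - l * fx (i + 1)) :=
    Finset.sum_le_sum (fun i _ => hstep i)
  have h2 : ∑ i ∈ Finset.range K, (fx i - l * fx (i + 1)) =
      fx 0 - fx K + ∑ i ∈ Finset.range K, (1 - l) * fx (i + 1) := by
    have hterm' : ∀ i, fx i - l * fx (i + 1) =
        (fx i - fx (i + 1)) + (1 - l) * fx (i + 1) := by intro i; ring
    simp_rw [hterm']
    rw [Finset.sum_add_distrib, Finset.sum_range_sub' (fun i => fx i) K]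
  have h3 : ∑ i ∈ Finset.range K, (1 - l) * fx (i + 1) ≤ ∑ i ∈ Finset.range K, M :=
    Finset.sum_le_sum (fun i _ => hterm i)
  have h4 : ∑ i ∈ Finset.range K, M = (K : ℝ) * M := by
    simp [Finset.sum_const, Finset.card_range, nsmul_eq_mul]
  have h5 := abs_le.1 (hD 0)
  have h6 := abs_le.1 (hD K)
  have hcast : ((∑ i ∈ Finset.range K, w i : ℤ) : ℝ) = ∑ i ∈ Finset.range K, (w i : ℝ) := by
    push_cast; rfl
  rw [hcast]
  linarith

lemma sum_estimate_lower {l D M : ℝ} {w : ℕ → ℤ} {fx : ℕ → ℝ}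
    (hstep : ∀ i, fx i - l * fx (i + 1) ≤ (w i : ℝ))
    (hterm : ∀ i, M ≤ (1 - l) * fx (i + 1))
    (hD : ∀ i, |fx i| ≤ D) (K : ℕ) :
    -(2 * D) + K * M ≤ ((∑ i ∈ Finset.range K, w i : ℤ) : ℝ) := by
  have h1 : (∑ i ∈ Finset.range K, (fx i - l * fx (i + 1))) ≤
      ∑ i ∈ Finset.range K, (w i : ℝ) :=
    Finset.sum_le_sum (fun i _ => hstep i)
  have h2 : ∑ i ∈ Finset.range K, (fx i - l * fx (i + 1)) =
      fx 0 - fx K + ∑ i ∈ Finset.range K, (1 - l) * fx (i + 1) := by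
    have hterm' : ∀ i, fx i - l * fx (i + 1) =
        (fx i - fx (i + 1)) + (1 - l) * fx (i + 1) := by intro i; ring
    simp_rw [hterm']
    rw [Finset.sum_add_distrib, Finset.sum_range_sub' (fun i => fx i) K]
  have h3 : ∑ i ∈ Finset.range K, M ≤ ∑ i ∈ Finset.range K, (1 - l) * fx (i + 1) :=
    Finset.sum_le_sum (fun i _ => hterm i)
  have h4 : ∑ i ∈ Finset.range K, M = (K : ℝ) * M := by
    simp [Finset.sum_const, Finset.card_range, nsmul_eq_mul]
  have h5 := abs_le.1 (hD 0)
  have h6 := abs_le.1 (hD K)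
  have hcast : ((∑ i ∈ Finset.range K, w i : ℤ) : ℝ) = ∑ i ∈ Finset.range K, (w i : ℝ) := by
    push_cast; rfl
  rw [hcast]
  linarith

end MPAux
namespace MPAux
open Filter Topology

lemma MPv_le_of_sum_le {D M : ℝ} {w : ℕ → ℤ}
    (h : ∀ K : ℕ, ((∑ i ∈ Finset.range K, w i : ℤ) : ℝ) ≤ 2 * D + K * M) :
    Game.MPv w ≤ ((M : ℝ) : EReal) := by
  have hb : Tendsto (fun K : ℕ => 2 * D / (K : ℝ) + M) atTop (𝓝 M) := by
    have := (tendsto_const_div_atTop_nhds_zero_nat (2 * D)).add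
      (tendsto_const_nhds : Tendsto (fun _ : ℕ => M) atTop (𝓝 M))
    simpa using this
  have hble : ∀ᶠ K : ℕ in atTop,
      ((((∑ i ∈ Finset.range K, w i : ℤ) : ℝ) / (K : ℝ) : ℝ) : EReal) ≤
        ((2 * D / (K : ℝ) + M : ℝ) : EReal) := by
    filter_upwards [eventually_ge_atTop 1] with K hK
    refine EReal.coe_le_coe_iff.2 ?_
    have hKpos : (0 : ℝ) < (K : ℝ) := by exact_mod_cast hK
    have h1 : ((∑ i ∈ Finset.range K, w i : ℤ) : ℝ) / (K : ℝ) ≤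
        (2 * D + (K : ℝ) * M) / (K : ℝ) := by gcongr; exact h K
    have h2 : (2 * D + (K : ℝ) * M) / (K : ℝ) = 2 * D / (K : ℝ) + M := by
      rw [add_div, mul_div_cancel_left₀ _ hKpos.ne']
    linarith
  have heq : limsup (fun K : ℕ => ((2 * D / (K : ℝ) + M : ℝ) : EReal)) atTop
      = ((M : ℝ) : EReal) :=
    ((continuous_coe_real_ereal.tendsto _).comp hb).limsup_eq
  rw [Game.MPv]
  exact le_trans (Filter.limsup_le_limsup hble) heq.le

lemma MPv_ge_of_sum_ge {D M : ℝ} {w : ℕ → ℤ}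
    (h : ∀ K : ℕ, -(2 * D) + K * M ≤ ((∑ i ∈ Finset.range K, w i : ℤ) : ℝ)) :
    ((M : ℝ) : EReal) ≤ Game.MPv w := by
  have hb : Tendsto (fun K : ℕ => -(2 * D) / (K : ℝ) + M) atTop (𝓝 M) := by
    have := (tendsto_const_div_atTop_nhds_zero_nat (-(2 * D))).add
      (tendsto_const_nhds : Tendsto (fun _ : ℕ => M) atTop (𝓝 M))
    simpa using this
  have hble : ∀ᶠ K : ℕ in atTop,
      ((-(2 * D) / (K : ℝ) + M : ℝ) : EReal) ≤
        ((((∑ i ∈ Finset.range K, w i : ℤ) : ℝ) / (K : ℝ) : ℝ) : EReal) := by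
    filter_upwards [eventually_ge_atTop 1] with K hK
    refine EReal.coe_le_coe_iff.2 ?_
    have hKpos : (0 : ℝ) < (K : ℝ) := by exact_mod_cast hK
    have h1 : (-(2 * D) + (K : ℝ) * M) / (K : ℝ) ≤
        ((∑ i ∈ Finset.range K, w i : ℤ) : ℝ) / (K : ℝ) := by gcongr; exact h K
    have h2 : (-(2 * D) + (K : ℝ) * M) / (K : ℝ) = -(2 * D) / (K : ℝ) + M := by
      rw [add_div, mul_div_cancel_left₀ _ hKpos.ne']
    linarith
  have heq : limsup (fun K : ℕ => ((-(2 * D) / (K : ℝ) + M : ℝ) : EReal)) atTop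
      = ((M : ℝ) : EReal) :=
    ((continuous_coe_real_ereal.tendsto _).comp hb).limsup_eq
  rw [Game.MPv]
  exact le_trans heq.ge (Filter.limsup_le_limsup hble)

end MPAux
namespace MPAux
open Filter Topology

noncomputable def lam (n : ℕ) : ℝ := 1 - 1 / ((n : ℝ) + 2)

lemma lam_pos_denom (n : ℕ) : (0 : ℝ) < (n : ℝ) + 2 := by positivity

lemma lam_nonneg (n : ℕ) : 0 ≤ lam n := by
  have h := lam_pos_denom n
  have h1 : 1 / ((n : ℝ) + 2) ≤ 1 := by
    rw [div_le_one h]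
    have : (0:ℝ) ≤ (n : ℝ) := Nat.cast_nonneg n
    linarith
  simp only [lam]
  linarith

lemma lam_lt_one (n : ℕ) : lam n < 1 := by
  have h := lam_pos_denom n
  have h1 : 0 < 1 / ((n : ℝ) + 2) := by positivity
  simp only [lam]
  linarith

lemma lam_tendsto : Tendsto lam atTop (𝓝 1) := by
  have h : Tendsto (fun n : ℕ => 1 / ((n : ℝ) + 2)) atTop (𝓝 0) := by
    have h2 : Tendsto (fun n : ℕ => ((n : ℝ) + 2)) atTop atTop :=
      tendsto_atTop_add_const_right _ 2 tendsto_natCast_atTop_atTop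
    exact tendsto_const_nhds.div_atTop h2
  have h2 := (tendsto_const_nhds : Tendsto (fun _ : ℕ => (1:ℝ)) atTop (𝓝 1)).sub h
  have h3 : Tendsto (fun n : ℕ => 1 - 1 / ((n : ℝ) + 2)) atTop (𝓝 1) := by simpa using h2
  exact h3

variable {V : Type} [Fintype V]

theorem key (G : Game V ℤ) : ∃ (σ₀ : G.MinStrat) (τ₀ : G.MaxStrat) (μ : V → ℝ),
    (∀ v : V, ∀ π : G.PlaysMin σ₀ v, Game.MPv (G.wseq π.1) ≤ ((μ v : ℝ) : EReal)) ∧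
    (∀ v : V, ∀ π : G.PlaysMax τ₀ v, ((μ v : ℝ) : EReal) ≤ Game.MPv (G.wseq π.1)) := by
  classical
  have hex : ∀ n : ℕ, ∃ f : V → ℝ, bell G (lam n) f = f :=
    fun n => exists_dval G (lam_nonneg n) (lam_lt_one n)
  set F : ℕ → V → ℝ := fun n => (hex n).choose with hF
  have hfix : ∀ n, bell G (lam n) (F n) = F n := fun n => (hex n).choose_spec
  -- raw positional strategies at each discount factor
  obtain ⟨sraw, hsraw⟩ : ∃ s : ℕ → V → V, ∀ n (v : V), G.isMin v →
      G.E v (s n v) ∧ F n v = ((G.wt v (s n v) : ℝ)) + lam n * F n (s n v) := by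
    refine ⟨fun n v => if hv : G.isMin v then (bell_min_ach (hfix n) hv).choose else v, ?_⟩
    intro n v hv
    simp only [dif_pos hv]
    exact (bell_min_ach (hfix n) hv).choose_spec
  obtain ⟨traw, htraw⟩ : ∃ t : ℕ → V → V, ∀ n (v : V), ¬ G.isMin v →
      G.E v (t n v) ∧ F n v = ((G.wt v (t n v) : ℝ)) + lam n * F n (t n v) := by
    refine ⟨fun n v => if hv : G.isMin v then v else (bell_max_ach (hfix n) hv).choose, ?_⟩
    intro n v hv
    simp only [dif_neg hv]
    exact (bell_max_ach (hfix n) hv).choose_spec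
  -- pigeonhole: a pair of strategies used infinitely often
  obtain ⟨y, hy⟩ := Finite.exists_infinite_fiber (fun n => ((sraw n, traw n) : (V → V) × (V → V)))
  have hinf : {n : ℕ | (sraw n, traw n) = y}.Infinite := by
    have hset : (fun n => ((sraw n, traw n) : (V → V) × (V → V))) ⁻¹' {y}
        = {n : ℕ | (sraw n, traw n) = y} := by
      ext n; simp
    rw [← hset]
    exact Set.infinite_coe_iff.mp hy
  set nth : ℕ → ℕ := fun k => Nat.nth (fun n => (sraw n, traw n) = y) k with hnthdef
  have hnthy : ∀ k, (sraw (nth k), traw (nth k)) = y :=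
    fun k => Nat.nth_mem_of_infinite hinf k
  have hnthsm : StrictMono nth := Nat.nth_strictMono hinf
  -- normalized values, compactness
  set g : ℕ → V → ℝ := fun n v => (1 - lam n) * F n v with hg
  have hgmem : ∀ k, g (nth k) ∈ Set.univ.pi (fun _ : V => Set.Icc (-(Wb G)) (Wb G)) := by
    intro k
    rw [Set.mem_univ_pi]
    intro v
    have hb := dval_bound (hfix (nth k)) (lam_nonneg _) (lam_lt_one _)
    have h1 : |F (nth k) v| ≤ dist (F (nth k)) 0 := abs_apply_le_dist_zero _ v
    have h2 : 0 ≤ 1 - lam (nth k) := by linarith [lam_lt_one (nth k)]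
    rw [Set.mem_Icc, ← abs_le]
    calc |g (nth k) v| = (1 - lam (nth k)) * |F (nth k) v| := by
          rw [hg]; dsimp only; rw [abs_mul, abs_of_nonneg h2]
      _ ≤ (1 - lam (nth k)) * dist (F (nth k)) 0 := mul_le_mul_of_nonneg_left h1 h2
      _ ≤ Wb G := hb
  obtain ⟨μ, -, ψ, hψ, hconv⟩ :=
    (isCompact_univ_pi (fun _ : V => isCompact_Icc)).tendsto_subseq hgmem
  set N : ℕ → ℕ := fun k => nth (ψ k) with hN
  have hgconv : Tendsto (fun k => g (N k)) atTop (𝓝 μ) := hconv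
  have hNsm : StrictMono N := hnthsm.comp hψ
  have hNtop : Tendsto N atTop atTop := hNsm.tendsto_atTop
  have hlam1 : Tendsto (fun k => lam (N k)) atTop (𝓝 1) := lam_tendsto.comp hNtop
  have h1l0 : Tendsto (fun k => 1 - lam (N k)) atTop (𝓝 0) := by
    have := (tendsto_const_nhds : Tendsto (fun _ : ℕ => (1:ℝ)) atTop (𝓝 1)).sub hlam1
    simpa using this
  have hgv : ∀ v, Tendsto (fun k => g (N k) v) atTop (𝓝 (μ v)) :=
    fun v => tendsto_pi_nhds.1 hgconv v
  have he0 : Tendsto (fun k => dist (g (N k)) μ) atTop (𝓝 0) :=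
    tendsto_iff_dist_tendsto_zero.1 hgconv
  -- fixed strategies
  have hsy : ∀ k, sraw (N k) = y.1 := fun k => congrArg Prod.fst (hnthy (ψ k))
  have hty : ∀ k, traw (N k) = y.2 := fun k => congrArg Prod.snd (hnthy (ψ k))
  have hminP : ∀ k (v : V), G.isMin v →
      G.E v (y.1 v) ∧ F (N k) v = ((G.wt v (y.1 v) : ℝ)) + lam (N k) * F (N k) (y.1 v) := by
    intro k v hv
    have h := hsraw (N k) v hv
    rwa [hsy k] at h
  have hmaxP : ∀ k (v : V), ¬ G.isMin v →
      G.E v (y.2 v) ∧ F (N k) v = ((G.wt v (y.2 v) : ℝ)) + lam (N k) * F (N k) (y.2 v) := by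
    intro k v hv
    have h := htraw (N k) v hv
    rwa [hty k] at h
  -- limit relations for μ
  have hgstep : ∀ (v u : V) (k : ℕ), F (N k) v = ((G.wt v u : ℝ)) + lam (N k) * F (N k) u →
      g (N k) v = (1 - lam (N k)) * ((G.wt v u : ℝ)) + lam (N k) * g (N k) u := by
    intro v u k h
    show (1 - lam (N k)) * F (N k) v
        = (1 - lam (N k)) * ((G.wt v u : ℝ)) + lam (N k) * ((1 - lam (N k)) * F (N k) u)
    rw [h]; ring
  have hlim2 : ∀ (v u : V), Tendsto
      (fun k => (1 - lam (N k)) * ((G.wt v u : ℝ)) + lam (N k) * g (N k) u) atTop (𝓝 (μ u)) := by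
    intro v u
    have h1 : Tendsto (fun k => (1 - lam (N k)) * ((G.wt v u : ℝ))) atTop (𝓝 0) := by
      simpa using h1l0.mul_const ((G.wt v u : ℝ))
    have h2 : Tendsto (fun k => lam (N k) * g (N k) u) atTop (𝓝 (μ u)) := by
      simpa using hlam1.mul (hgv u)
    simpa using h1.add h2
  have hMinEq : ∀ v : V, G.isMin v → μ v = μ (y.1 v) := by
    intro v hv
    refine tendsto_nhds_unique (hgv v) ?_
    have heq : (fun k => g (N k) v)
        = fun k => (1 - lam (N k)) * ((G.wt v (y.1 v) : ℝ)) + lam (N k) * g (N k) (y.1 v) :=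
      funext (fun k => hgstep v (y.1 v) k (hminP k v hv).2)
    rw [heq]
    exact hlim2 v (y.1 v)
  have hMaxEq : ∀ v : V, ¬ G.isMin v → μ v = μ (y.2 v) := by
    intro v hv
    refine tendsto_nhds_unique (hgv v) ?_
    have heq : (fun k => g (N k) v)
        = fun k => (1 - lam (N k)) * ((G.wt v (y.2 v) : ℝ)) + lam (N k) * g (N k) (y.2 v) :=
      funext (fun k => hgstep v (y.2 v) k (hmaxP k v hv).2)
    rw [heq]
    exact hlim2 v (y.2 v)
  have hMinLe : ∀ v u : V, G.isMin v → G.E v u → μ v ≤ μ u := by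
    intro v u hv hu
    refine le_of_tendsto_of_tendsto' (hgv v) (hlim2 v u) (fun k => ?_)
    have h := bell_min_le (hfix (N k)) hv hu
    have h2 : 0 ≤ 1 - lam (N k) := by linarith [lam_lt_one (N k)]
    have h5 := mul_le_mul_of_nonneg_left h h2
    calc g (N k) v = (1 - lam (N k)) * F (N k) v := rfl
      _ ≤ (1 - lam (N k)) * (((G.wt v u : ℝ)) + lam (N k) * F (N k) u) := h5
      _ = (1 - lam (N k)) * ((G.wt v u : ℝ)) + lam (N k) * g (N k) u := by
          show _ = _ + lam (N k) * ((1 - lam (N k)) * F (N k) u); ring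
  have hMaxLe : ∀ v u : V, ¬ G.isMin v → G.E v u → μ u ≤ μ v := by
    intro v u hv hu
    refine le_of_tendsto_of_tendsto' (hlim2 v u) (hgv v) (fun k => ?_)
    have h := bell_max_ge (hfix (N k)) hv hu
    have h2 : 0 ≤ 1 - lam (N k) := by linarith [lam_lt_one (N k)]
    have h5 := mul_le_mul_of_nonneg_left h h2
    calc (1 - lam (N k)) * ((G.wt v u : ℝ)) + lam (N k) * g (N k) u
        = (1 - lam (N k)) * (((G.wt v u : ℝ)) + lam (N k) * F (N k) u) := by
          show _ + lam (N k) * ((1 - lam (N k)) * F (N k) u) = _; ring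
      _ ≤ (1 - lam (N k)) * F (N k) v := h5
      _ = g (N k) v := rfl
  refine ⟨⟨y.1, fun v hv => (hminP 0 v hv).1⟩, ⟨y.2, fun v hv => (hmaxP 0 v hv).1⟩, μ, ?_, ?_⟩
  · -- upper bound along plays consistent with the Min strategy
    rintro v ⟨π, hπ0, hpath, hcons⟩
    have hmono : ∀ i, μ (π i) ≤ μ v := by
      have hstep0 : ∀ i, μ (π (i+1)) ≤ μ (π i) := by
        intro i
        by_cases hv : G.isMin (π i)
        · rw [hcons i hv]; exact (hMinEq (π i) hv).ge
        · exact hMaxLe (π i) (π (i+1)) hv (hpath i)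
      intro i
      induction i with
      | zero => exact (congrArg μ hπ0).le
      | succ n ih => exact (hstep0 n).trans ih
    have htend : Tendsto (fun k => ((μ v + dist (g (N k)) μ : ℝ) : EReal)) atTop
        (𝓝 ((μ v : ℝ) : EReal)) := by
      have h1 : Tendsto (fun k => μ v + dist (g (N k)) μ) atTop (𝓝 (μ v)) := by
        simpa using (tendsto_const_nhds : Tendsto (fun _ : ℕ => μ v) atTop (𝓝 (μ v))).add he0
      exact (continuous_coe_real_ereal.tendsto _).comp h1
    refine ge_of_tendsto htend (Eventually.of_forall (fun k => ?_))
    have hstep : ∀ i, ((G.wseq π i : ℤ) : ℝ)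
        ≤ (fun i => F (N k) (π i)) i - lam (N k) * (fun i => F (N k) (π i)) (i+1) := by
      intro i
      show ((G.wt (π i) (π (i+1)) : ℝ)) ≤ F (N k) (π i) - lam (N k) * F (N k) (π (i+1))
      by_cases hv : G.isMin (π i)
      · have h := (hminP k (π i) hv).2
        rw [hcons i hv]
        linarith [h.le]
      · have h := bell_max_ge (hfix (N k)) hv (hpath i)
        linarith
    have hterm : ∀ i, (1 - lam (N k)) * (fun i => F (N k) (π i)) (i+1)
        ≤ μ v + dist (g (N k)) μ := by
      intro i
      have h1 : |g (N k) (π (i+1)) - μ (π (i+1))| ≤ dist (g (N k)) μ := by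
        have := dist_le_pi_dist (g (N k)) μ (π (i+1))
        simpa [Real.dist_eq] using this
      have h2 := hmono (i+1)
      have h3 : g (N k) (π (i+1)) = (1 - lam (N k)) * F (N k) (π (i+1)) := rfl
      have h4 := (abs_le.1 h1).2
      show (1 - lam (N k)) * F (N k) (π (i+1)) ≤ _
      linarith
    have hD : ∀ i, |(fun i => F (N k) (π i)) i| ≤ dist (F (N k)) 0 :=
      fun i => abs_apply_le_dist_zero _ _
    exact MPv_le_of_sum_le (fun K => sum_estimate hstep hterm hD K)
  · -- lower bound along plays consistent with the Max strategy
    rintro v ⟨π, hπ0, hpath, hcons⟩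
    have hmono : ∀ i, μ v ≤ μ (π i) := by
      have hstep0 : ∀ i, μ (π i) ≤ μ (π (i+1)) := by
        intro i
        by_cases hv : G.isMin (π i)
        · exact hMinLe (π i) (π (i+1)) hv (hpath i)
        · rw [hcons i hv]; exact (hMaxEq (π i) hv).le
      intro i
      induction i with
      | zero => exact (congrArg μ hπ0).ge
      | succ n ih => exact ih.trans (hstep0 n)
    have htend : Tendsto (fun k => ((μ v - dist (g (N k)) μ : ℝ) : EReal)) atTop
        (𝓝 ((μ v : ℝ) : EReal)) := by
      have h1 : Tendsto (fun k => μ v - dist (g (N k)) μ) atTop (𝓝 (μ v)) := by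
        simpa using (tendsto_const_nhds : Tendsto (fun _ : ℕ => μ v) atTop (𝓝 (μ v))).sub he0
      exact (continuous_coe_real_ereal.tendsto _).comp h1
    refine le_of_tendsto htend (Eventually.of_forall (fun k => ?_))
    have hstep : ∀ i, (fun i => F (N k) (π i)) i - lam (N k) * (fun i => F (N k) (π i)) (i+1)
        ≤ ((G.wseq π i : ℤ) : ℝ) := by
      intro i
      show F (N k) (π i) - lam (N k) * F (N k) (π (i+1)) ≤ ((G.wt (π i) (π (i+1)) : ℝ))
      by_cases hv : G.isMin (π i)
      · have h := bell_min_le (hfix (N k)) hv (hpath i)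
        linarith
      · have h := (hmaxP k (π i) hv).2
        rw [hcons i hv]
        linarith [h.le]
    have hterm : ∀ i, μ v - dist (g (N k)) μ
        ≤ (1 - lam (N k)) * (fun i => F (N k) (π i)) (i+1) := by
      intro i
      have h1 : |g (N k) (π (i+1)) - μ (π (i+1))| ≤ dist (g (N k)) μ := by
        have := dist_le_pi_dist (g (N k)) μ (π (i+1))
        simpa [Real.dist_eq] using this
      have h2 := hmono (i+1)
      have h3 : g (N k) (π (i+1)) = (1 - lam (N k)) * F (N k) (π (i+1)) := rfl
      have h4 := (abs_le.1 h1).1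
      show _ ≤ (1 - lam (N k)) * F (N k) (π (i+1))
      linarith
    have hD : ∀ i, |(fun i => F (N k) (π i)) i| ≤ dist (F (N k)) 0 :=
      fun i => abs_apply_le_dist_zero _ _
    exact MPv_ge_of_sum_ge (fun K => sum_estimate_lower hstep hterm hD K)

end MPAux
namespace MPAux

variable {V : Type} [Fintype V]

/-- The unique play consistent with both strategies. -/
lemma joint_play (G : Game V ℤ) (σ : G.MinStrat) (τ : G.MaxStrat) (v : V) :
    ∃ π : ℕ → V, π 0 = v ∧ G.IsPath π ∧ G.ConsMin σ π ∧ G.ConsMax τ π := by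
  classical
  set st : V → V := fun x => if G.isMin x then σ.1 x else τ.1 x with hst
  refine ⟨fun i => st^[i] v, rfl, ?_, ?_, ?_⟩
  · intro i
    show G.E (st^[i] v) (st^[i+1] v)
    rw [Function.iterate_succ_apply']
    by_cases hv : G.isMin (st^[i] v)
    · rw [hst] at hv ⊢; simp only [if_pos hv]; exact σ.2 _ hv
    · rw [hst] at hv ⊢; simp only [if_neg hv]; exact τ.2 _ hv
  · intro i hv
    show st^[i+1] v = σ.1 (st^[i] v)
    rw [Function.iterate_succ_apply']
    rw [hst]; simp only []
    rw [if_pos hv]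
  · intro i hv
    show st^[i+1] v = τ.1 (st^[i] v)
    rw [Function.iterate_succ_apply']
    rw [hst]; simp only []
    rw [if_neg hv]

end MPAux

open MPAux

/-- Positional determinacy of mean-payoff games. -/
theorem mp_positional_determinacy {V : Type} [Fintype V] (G : Game V ℤ) :
    ∃ (σ₀ : G.MinStrat) (τ₀ : G.MaxStrat), ∀ v : V,
      (⨆ π : G.PlaysMin σ₀ v, MPv (G.wseq π.1))
          = (⨅ σ : G.MinStrat, ⨆ π : G.PlaysMin σ v, MPv (G.wseq π.1)) ∧
      (⨅ σ : G.MinStrat, ⨆ π : G.PlaysMin σ v, MPv (G.wseq π.1))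
          = (⨆ τ : G.MaxStrat, ⨅ π : G.PlaysMax τ v, MPv (G.wseq π.1)) ∧
      (⨆ τ : G.MaxStrat, ⨅ π : G.PlaysMax τ v, MPv (G.wseq π.1))
          = (⨅ π : G.PlaysMax τ₀ v, MPv (G.wseq π.1)) := by
  obtain ⟨σ₀, τ₀, μ, hσ, hτ⟩ := key G
  refine ⟨σ₀, τ₀, fun v => ?_⟩
  have hAμ : (⨆ π : G.PlaysMin σ₀ v, MPv (G.wseq π.1)) ≤ ((μ v : ℝ) : EReal) :=
    iSup_le (hσ v)
  have hμD : ((μ v : ℝ) : EReal) ≤ ⨅ π : G.PlaysMax τ₀ v, MPv (G.wseq π.1) :=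
    le_iInf (hτ v)
  have hBA : (⨅ σ : G.MinStrat, ⨆ π : G.PlaysMin σ v, MPv (G.wseq π.1))
      ≤ ⨆ π : G.PlaysMin σ₀ v, MPv (G.wseq π.1) :=
    iInf_le (fun σ => ⨆ π : G.PlaysMin σ v, MPv (G.wseq π.1)) σ₀
  have hDC : (⨅ π : G.PlaysMax τ₀ v, MPv (G.wseq π.1))
      ≤ ⨆ τ : G.MaxStrat, ⨅ π : G.PlaysMax τ v, MPv (G.wseq π.1) :=
    le_iSup (fun τ => ⨅ π : G.PlaysMax τ v, MPv (G.wseq π.1)) τ₀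
  have hCB : (⨆ τ : G.MaxStrat, ⨅ π : G.PlaysMax τ v, MPv (G.wseq π.1))
      ≤ ⨅ σ : G.MinStrat, ⨆ π : G.PlaysMin σ v, MPv (G.wseq π.1) := by
    refine le_iInf (fun σ' => iSup_le (fun τ' => ?_))
    obtain ⟨π, h0, hpath, hconsMin, hconsMax⟩ := joint_play G σ' τ' v
    calc (⨅ π : G.PlaysMax τ' v, MPv (G.wseq π.1))
        ≤ MPv (G.wseq π) := iInf_le (fun π : G.PlaysMax τ' v => MPv (G.wseq π.1))
          ⟨π, h0, hpath, hconsMax⟩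
      _ ≤ ⨆ π : G.PlaysMin σ' v, MPv (G.wseq π.1) :=
          le_iSup (fun π : G.PlaysMin σ' v => MPv (G.wseq π.1)) ⟨π, h0, hpath, hconsMin⟩
  exact ⟨le_antisymm (hAμ.trans (hμD.trans (hDC.trans hCB))) hBA,
    le_antisymm (hBA.trans (hAμ.trans (hμD.trans hDC))) hCB,
    le_antisymm (hCB.trans (hBA.trans (hAμ.trans hμD))) hDC⟩
end

section
/- Positional determinacy of energy games: for every game G = (V, E, w, V_Min, V_Max) with weights in ℤ ∪ {∞}, there exist a strategy σ₀ for Min and a strategy τ₀ for Max such that for every vertex v ∈ V, sup over infinite paths π from v consistent with σ₀ of En(w(π)) = inf over Min strategies σ of sup over infinite paths π from v consistent with σ of En(w(π)) = sup over Max strategies τ of inf over infinite paths π from v consistent with τ of En(w(π)) = inf over infinite paths π from v consistent with τ₀ of En(w(π)). -/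
attribute [local instance] Classical.propDecidable

open Game

namespace EnPD

lemma enat_cases (x : ℕ∞) : x = ⊤ ∨ ∃ n : ℕ, x = (n : ℕ∞) := by
  induction x using ENat.recTopCoe with
  | top => exact Or.inl rfl
  | coe n => exact Or.inr ⟨n, rfl⟩

noncomputable abbrev e (x : ℕ∞) : EReal := enatToE x

@[simp] lemma e_top : e ⊤ = ⊤ := by simp [e, enatToE]

@[simp] lemma e_coe (n : ℕ) : e (n : ℕ∞) = ((n : ℝ) : EReal) := by
  simp [e, enatToE]

lemma e_zero : e 0 = 0 := by
  have : ((0:ℕ) : ℕ∞) = 0 := by simp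
  rw [← this, e_coe]; simp

lemma e_nonneg (x : ℕ∞) : 0 ≤ e x := by
  rcases enat_cases x with rfl | ⟨n, rfl⟩
  · simp
  · rw [e_coe]; exact_mod_cast (by positivity : (0:ℝ) ≤ (n:ℝ))

lemma e_ne_bot (x : ℕ∞) : e x ≠ ⊥ := fun h => by
  have := e_nonneg x; rw [h] at this; simp at this

lemma e_mono : Monotone e := by
  intro x y hxy
  rcases enat_cases y with rfl | ⟨m, rfl⟩
  · simp
  · rcases enat_cases x with rfl | ⟨n, rfl⟩
    · simp at hxy
    · rw [e_coe, e_coe]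
      have : n ≤ m := by exact_mod_cast hxy
      exact_mod_cast (by exact_mod_cast this : ((n:ℝ):EReal) ≤ ((m:ℝ):EReal))

/-- attainment of infima in `ℕ∞`. -/
lemma enat_iInf_attained {ι : Sort*} [Nonempty ι] (f : ι → ℕ∞) : ∃ i, f i = ⨅ j, f j := by
  rcases enat_cases (⨅ j, f j) with h | ⟨n, h⟩
  · obtain ⟨i⟩ := ‹Nonempty ι›
    refine ⟨i, le_antisymm (by rw [h]; exact le_top) (iInf_le _ _)⟩
  · have h1 : ⨅ j, f j < (n : ℕ∞) + 1 := by
      rw [h]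
      have : ((n:ℕ∞)) < ((n+1 : ℕ) : ℕ∞) := by exact_mod_cast Nat.lt_succ_self n
      simpa using this
    obtain ⟨i, hi⟩ := iInf_lt_iff.mp h1
    refine ⟨i, le_antisymm ?_ (iInf_le _ _)⟩
    rw [h]
    rcases enat_cases (f i) with hfi | ⟨m, hfi⟩
    · rw [hfi] at hi
      have : ((n:ℕ∞) + 1) ≤ ⊤ := le_top
      exact absurd hi (not_lt.mpr this)
    · rw [hfi] at hi ⊢
      have hm : (m:ℕ∞) < ((n+1 : ℕ) : ℕ∞) := by
        rw [Nat.cast_add, Nat.cast_one]; exact hi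
      have : m < n + 1 := by exact_mod_cast hm
      exact_mod_cast Nat.lt_succ_iff.mp this

/-- witnesses below suprema in `ℕ∞`. -/
lemma enat_le_iSup_wit {ι : Sort*} [Nonempty ι] (f : ι → ℕ∞) (n : ℕ)
    (h : (n : ℕ∞) ≤ ⨆ j, f j) : ∃ i, (n : ℕ∞) ≤ f i := by
  rcases Nat.eq_zero_or_pos n with rfl | hn
  · obtain ⟨i⟩ := ‹Nonempty ι›; exact ⟨i, by simp⟩
  by_contra hc
  push_neg at hc
  have hb : (⨆ j, f j) ≤ ((n - 1 : ℕ) : ℕ∞) := by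
    refine iSup_le fun j => ?_
    rcases enat_cases (f j) with hfj | ⟨m, hfj⟩
    · exact absurd (hfj ▸ hc j) (by simp)
    · rw [hfj]
      have : (m : ℕ∞) < (n : ℕ∞) := hfj ▸ hc j
      have hm : m < n := by exact_mod_cast this
      exact_mod_cast Nat.le_sub_one_of_lt hm
  have h2 : (n : ℕ∞) ≤ ((n-1 : ℕ) : ℕ∞) := le_trans h hb
  have : n ≤ n - 1 := by exact_mod_cast h2
  omega

lemma ereal_eq_top_of_nat_le (y : EReal) (h : ∀ n : ℕ, ((n:ℝ) : EReal) ≤ y) : y = ⊤ := by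
  induction y using EReal.rec with
  | bot =>
    exact absurd (h 0) (not_le.mpr (by exact_mod_cast EReal.bot_lt_coe 0))
  | coe r =>
    obtain ⟨n, hn⟩ := exists_nat_gt r
    exact absurd (h n) (not_le.mpr (by exact_mod_cast hn))
  | top => rfl

lemma e_iSup {ι : Sort*} [Nonempty ι] (f : ι → ℕ∞) : e (⨆ i, f i) = ⨆ i, e (f i) := by
  refine le_antisymm ?_ (iSup_le fun i => e_mono (le_iSup _ _))
  rcases enat_cases (⨆ i, f i) with h | ⟨n, h⟩
  · rw [h, e_top]
    have : ∀ m : ℕ, ((m:ℝ) : EReal) ≤ ⨆ i, e (f i) := by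
      intro m
      obtain ⟨i, hi⟩ := enat_le_iSup_wit f m (by rw [h]; exact le_top)
      calc ((m:ℝ) : EReal) = e (m : ℕ∞) := (e_coe m).symm
        _ ≤ e (f i) := e_mono hi
        _ ≤ ⨆ i, e (f i) := le_iSup_of_le i le_rfl
    exact le_of_eq (ereal_eq_top_of_nat_le _ this).symm
  · obtain ⟨i, hi⟩ := enat_le_iSup_wit f n (le_of_eq h.symm)
    have hfi : f i = (n : ℕ∞) := le_antisymm (h ▸ le_iSup f i) hi
    rw [h, ← hfi]
    exact le_iSup_of_le i le_rfl

lemma e_iInf {ι : Sort*} [Nonempty ι] (f : ι → ℕ∞) : e (⨅ i, f i) = ⨅ i, e (f i) := by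
  obtain ⟨i₀, hi₀⟩ := enat_iInf_attained f
  refine le_antisymm (le_iInf fun i => e_mono (iInf_le _ _)) ?_
  rw [← hi₀]; exact iInf_le (fun i => e (f i)) i₀

lemma enat_eq_top_of_nat_le (x : ℕ∞) (h : ∀ m : ℕ, (m : ℕ∞) ≤ x) : x = ⊤ := by
  rcases enat_cases x with rfl | ⟨n, rfl⟩
  · rfl
  · have := h (n+1)
    have : n + 1 ≤ n := by exact_mod_cast this
    omega

end EnPD
namespace EnPD

variable {V : Type}

/-! ### `ℕ∞`-level arithmetic -/

noncomputable def addZ (x : ℕ∞) (z : ℤ) : ℕ∞ :=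
  if x = ⊤ then ⊤ else (((x.toNat : ℤ) + z).toNat : ℕ∞)

@[simp] lemma addZ_top (z : ℤ) : addZ ⊤ z = ⊤ := if_pos rfl

@[simp] lemma addZ_coe (n : ℕ) (z : ℤ) : addZ (n : ℕ∞) z = (((n : ℤ) + z).toNat : ℕ∞) := by
  rw [addZ, if_neg (by exact_mod_cast ENat.coe_ne_top n)]
  simp [ENat.toNat_coe]

lemma addZ_mono (z : ℤ) : Monotone (fun x => addZ x z) := by
  intro x y hxy
  rcases enat_cases y with rfl | ⟨m, rfl⟩
  · simp
  · rcases enat_cases x with rfl | ⟨n, rfl⟩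
    · simp at hxy
    · have hnm : n ≤ m := by exact_mod_cast hxy
      simp only [addZ_coe]
      exact_mod_cast Int.toNat_le_toNat (by omega)

lemma addZ_eq_top_iff (x : ℕ∞) (z : ℤ) : addZ x z = ⊤ ↔ x = ⊤ := by
  rcases enat_cases x with rfl | ⟨n, rfl⟩
  · simp
  · simp only [addZ_coe]
    constructor
    · intro h; exact absurd h (by exact_mod_cast ENat.coe_ne_top _)
    · intro h; exact absurd h (by exact_mod_cast ENat.coe_ne_top n)

noncomputable def gstep (w : WithTop ℤ) (x : ℕ∞) : ℕ∞ :=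
  if w = ⊤ then ⊤ else addZ x (w.untopD 0)

@[simp] lemma gstep_top (x : ℕ∞) : gstep ⊤ x = ⊤ := if_pos rfl

@[simp] lemma gstep_coe (z : ℤ) (x : ℕ∞) : gstep (z : WithTop ℤ) x = addZ x z := by
  rw [gstep, if_neg WithTop.coe_ne_top]; simp [WithTop.untopD_coe]

lemma gstep_mono (w : WithTop ℤ) : Monotone (gstep w) := by
  intro x y hxy
  rcases eq_or_ne w ⊤ with rfl | hw
  · simp
  · lift w to ℤ using hw
    simpa using addZ_mono w hxy

@[simp] lemma wToN_top : wToN (⊤ : WithTop ℤ) = ⊤ := by simp [wToN]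

@[simp] lemma wToN_coe (z : ℤ) : wToN (z : WithTop ℤ) = (z.toNat : ℕ∞) := by
  rw [wToN, dif_neg WithTop.coe_ne_top]
  simp

lemma wToN_zero : wToN (0 : WithTop ℤ) = 0 := by
  have : ((0:ℤ) : WithTop ℤ) = 0 := rfl
  rw [← this, wToN_coe]; simp

/-- `max(0, w + t) ≤ max(0, w + max(0,t))`. -/
lemma wToN_add_le (w t : WithTop ℤ) : wToN (w + t) ≤ gstep w (wToN t) := by
  rcases eq_or_ne w ⊤ with rfl | hw
  · simp
  lift w to ℤ using hw
  rcases eq_or_ne t ⊤ with rfl | ht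
  · simp [WithTop.add_top]
  lift t to ℤ using ht
  rw [← WithTop.coe_add, wToN_coe, gstep_coe, wToN_coe, addZ_coe]
  exact_mod_cast Int.toNat_le_toNat (by omega)

variable (G : Game V (WithTop ℤ))

/-! ### partial sums and the `ℕ∞`-valued energy -/

noncomputable def psum (π : ℕ → V) (k : ℕ) : WithTop ℤ :=
  ∑ i ∈ Finset.range k, G.wt (π i) (π (i + 1))

noncomputable def EnN (π : ℕ → V) : ℕ∞ := ⨆ k, wToN (psum G π k)

def shift (π : ℕ → V) : ℕ → V := fun n => π (n + 1)

lemma psum_zero (π : ℕ → V) : psum G π 0 = 0 := by simp [psum]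

lemma psum_succ' (π : ℕ → V) (k : ℕ) :
    psum G π (k + 1) = G.wt (π 0) (π 1) + psum G (shift π) k := by
  rw [psum, Finset.sum_range_succ', add_comm]
  rfl

lemma psum_succ (π : ℕ → V) (k : ℕ) :
    psum G π (k + 1) = psum G π k + G.wt (π k) (π (k + 1)) :=
  Finset.sum_range_succ _ k

lemma psum_one (π : ℕ → V) : psum G π 1 = G.wt (π 0) (π 1) := by
  simp [psum]

lemma psum_add (π : ℕ → V) (K j : ℕ) :
    psum G π (K + j) = psum G π K + ∑ i ∈ Finset.range j, G.wt (π (K + i)) (π (K + i + 1)) := by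
  induction j with
  | zero => simp
  | succ j ih =>
    rw [show K + (j+1) = (K+j) + 1 from rfl, psum, Finset.sum_range_succ, ← psum, ih,
      Finset.sum_range_succ, add_assoc]

lemma EnN_nonneg (π : ℕ → V) (k : ℕ) : wToN (psum G π k) ≤ EnN G π := by
  rw [EnN]; exact le_iSup_of_le k le_rfl

lemma EnN_top_of_wt_top (π : ℕ → V) (i : ℕ) (h : G.wt (π i) (π (i + 1)) = ⊤) :
    EnN G π = ⊤ := by
  have : psum G π (i + 1) = ⊤ := by
    rw [psum]
    exact WithTop.sum_eq_top.mpr ⟨i, Finset.self_mem_range_succ i, h⟩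
  refine le_antisymm le_top ?_
  calc (⊤:ℕ∞) = wToN (psum G π (i+1)) := by rw [this, wToN_top]
    _ ≤ EnN G π := EnN_nonneg G π _

/-- the fundamental recurrence for the energy of a play. -/
lemma EnN_rec (π : ℕ → V) :
    EnN G π = gstep (G.wt (π 0) (π 1)) (EnN G (shift π)) := by
  rcases eq_or_ne (G.wt (π 0) (π 1)) ⊤ with hw | hw
  · rw [hw, gstep_top, EnN_top_of_wt_top G π 0 hw]
  obtain ⟨z, hz⟩ : ∃ z : ℤ, G.wt (π 0) (π 1) = (z : WithTop ℤ) :=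
    ⟨(G.wt (π 0) (π 1)).untop hw, (WithTop.coe_untop _ hw).symm⟩
  rw [hz, gstep_coe]
  refine le_antisymm (iSup_le fun k => ?_) ?_
  · cases k with
    | zero => rw [psum_zero, wToN_zero]; exact bot_le
    | succ k =>
      rw [psum_succ', hz]
      calc wToN ((z : WithTop ℤ) + psum G (shift π) k)
          ≤ gstep (z : WithTop ℤ) (wToN (psum G (shift π) k)) := wToN_add_le _ _
        _ = addZ (wToN (psum G (shift π) k)) z := gstep_coe _ _
        _ ≤ addZ (EnN G (shift π)) z := addZ_mono z (EnN_nonneg _ _ _)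
  · rcases enat_cases (EnN G (shift π)) with hs | ⟨n, hs⟩
    · -- the tail energy is infinite: so is the total energy
      rw [hs, addZ_top]
      rw [top_le_iff]
      by_cases htop : ∃ k, psum G (shift π) k = ⊤
      · obtain ⟨k, hk⟩ := htop
        have : psum G π (k+1) = ⊤ := by
          rw [psum_succ', hz, hk, WithTop.add_top]
        refine top_le_iff.mp ?_
        calc (⊤:ℕ∞) = wToN (psum G π (k+1)) := by rw [this, wToN_top]
          _ ≤ EnN G π := EnN_nonneg G π _
      · push_neg at htop
        refine enat_eq_top_of_nat_le _ fun m => ?_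
        obtain ⟨k, hk⟩ := enat_le_iSup_wit (fun k => wToN (psum G (shift π) k))
          (m + z.natAbs) (by rw [← EnN, hs]; exact le_top)
        obtain ⟨t, ht⟩ : ∃ t : ℤ, psum G (shift π) k = (t : WithTop ℤ) :=
          ⟨(psum G (shift π) k).untop (htop k), (WithTop.coe_untop _ _).symm⟩
        rw [ht, wToN_coe] at hk
        have htn : (m + z.natAbs : ℕ) ≤ t.toNat := by exact_mod_cast hk
        have hp : psum G π (k+1) = ((z + t : ℤ) : WithTop ℤ) := by
          rw [psum_succ', hz, ht, WithTop.coe_add]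
        calc (m : ℕ∞) ≤ ((z+t).toNat : ℕ∞) := by
              have hm : m ≤ (z+t).toNat := by omega
              exact_mod_cast hm
          _ = wToN (psum G π (k+1)) := by rw [hp, wToN_coe]
          _ ≤ EnN G π := EnN_nonneg G π _
    · -- the tail energy is a finite `n`, attained
      rw [hs]
      rw [addZ_coe]
      rcases le_or_gt ((n:ℤ) + z) 0 with hnz | hnz
      · rw [Int.toNat_of_nonpos hnz]
        exact bot_le
      obtain ⟨k, hk⟩ := enat_le_iSup_wit (fun k => wToN (psum G (shift π) k)) n
        (by rw [← EnN, hs])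
      have hk2 : wToN (psum G (shift π) k) ≤ n := by rw [← hs]; exact EnN_nonneg G _ k
      have hkn : wToN (psum G (shift π) k) = (n : ℕ∞) := le_antisymm hk2 hk
      rcases eq_or_ne (psum G (shift π) k) ⊤ with htk | htk
      · rw [htk, wToN_top] at hkn
        exact absurd hkn.symm (by exact_mod_cast ENat.coe_ne_top n)
      obtain ⟨t, ht⟩ : ∃ t : ℤ, psum G (shift π) k = (t : WithTop ℤ) :=
        ⟨(psum G (shift π) k).untop htk, (WithTop.coe_untop _ _).symm⟩
      rw [ht, wToN_coe] at hkn
      have htn : t.toNat = n := by exact_mod_cast hkn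
      rcases Nat.eq_zero_or_pos n with hn0 | hnpos
      · -- use the empty tail sum instead
        subst hn0
        have hp : psum G π 1 = (z : WithTop ℤ) := by rw [psum_one, hz]
        calc (((0:ℤ) + z).toNat : ℕ∞) = wToN (psum G π 1) := by
              rw [hp, wToN_coe]; norm_num
          _ ≤ EnN G π := EnN_nonneg G π _
      · have htval : t = (n : ℤ) := by omega
        have hp : psum G π (k+1) = ((z + t : ℤ) : WithTop ℤ) := by
          rw [psum_succ', hz, ht, WithTop.coe_add]
        calc (((n:ℤ) + z).toNat : ℕ∞) = wToN (psum G π (k+1)) := by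
              rw [hp, wToN_coe, htval]; congr 1; omega
          _ ≤ EnN G π := EnN_nonneg G π _

end EnPD
namespace EnPD

variable {V : Type} (G : Game V (WithTop ℤ))

instance succNonempty (v : V) : Nonempty {u // G.E v u} :=
  let ⟨u, hu⟩ := G.nosink v; ⟨⟨u, hu⟩⟩

/-! ### the one-step value operator and its least fixed point -/

noncomputable def gval (f : V → ℕ∞) (v u : V) : ℕ∞ := gstep (G.wt v u) (f u)

lemma gval_mono {f g : V → ℕ∞} (h : f ≤ g) (v u : V) : gval G f v u ≤ gval G g v u :=
  gstep_mono _ (h u)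

noncomputable def Fop : (V → ℕ∞) →o (V → ℕ∞) where
  toFun f v :=
    if G.isMin v then ⨅ u : {u // G.E v u}, gval G f v u
    else ⨆ u : {u // G.E v u}, gval G f v u
  monotone' := by
    intro f g h v
    dsimp only
    split
    · exact iInf_mono fun u => gval_mono G h v u
    · exact iSup_mono fun u => gval_mono G h v u

noncomputable def fstar : V → ℕ∞ := OrderHom.lfp (Fop G)

lemma fstar_fix : Fop G (fstar G) = fstar G := OrderHom.map_lfp _

lemma fstar_min {v : V} (h : G.isMin v) :
    fstar G v = ⨅ u : {u // G.E v u}, gval G (fstar G) v u := by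
  conv_lhs => rw [← fstar_fix G]
  exact if_pos h

lemma fstar_max {v : V} (h : ¬ G.isMin v) :
    fstar G v = ⨆ u : {u // G.E v u}, gval G (fstar G) v u := by
  conv_lhs => rw [← fstar_fix G]
  exact if_neg h

lemma fstar_le_of_prefix {f : V → ℕ∞} (h : Fop G f ≤ f) : fstar G ≤ f :=
  OrderHom.lfp_le _ h

/-! ### the optimal Min strategy -/

lemma exists_argmin (v : V) :
    ∃ u : {u // G.E v u}, gval G (fstar G) v u = ⨅ u' : {u' // G.E v u'}, gval G (fstar G) v u' :=
  enat_iInf_attained _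

noncomputable def sigma0 : G.MinStrat :=
  ⟨fun v => if h : G.isMin v then (Classical.choose (exists_argmin G v)).1
            else Classical.choose (G.nosink v),
   fun v hv => by
     dsimp only
     rw [dif_pos hv]
     exact (Classical.choose (exists_argmin G v)).2⟩

lemma fstar_ge_edge {v u : V} (hE : G.E v u) (hmin : G.isMin v → u = (sigma0 G).1 v) :
    gval G (fstar G) v u ≤ fstar G v := by
  by_cases h : G.isMin v
  · have hu : u = (sigma0 G).1 v := hmin h
    rw [fstar_min G h, hu]
    have : (sigma0 G).1 v = (Classical.choose (exists_argmin G v)).1 := dif_pos h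
    rw [this]
    exact le_of_eq (Classical.choose_spec (exists_argmin G v))
  · rw [fstar_max G h]
    exact le_iSup_of_le ⟨u, hE⟩ le_rfl

lemma shift_path {π : ℕ → V} (h : G.IsPath π) : G.IsPath (shift π) := fun i => h (i+1)

lemma shift_consMin {σ : G.MinStrat} {π : ℕ → V} (h : G.ConsMin σ π) :
    G.ConsMin σ (shift π) := fun i => h (i+1)

lemma shift_consMax {τ : G.MaxStrat} {π : ℕ → V} (h : G.ConsMax τ π) :
    G.ConsMax τ (shift π) := fun i => h (i+1)

/-- Min's positional strategy `σ₀` guarantees energy at most `fstar`. -/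
lemma upper_bound {π : ℕ → V} (hpath : G.IsPath π) (hcons : G.ConsMin (sigma0 G) π) :
    EnN G π ≤ fstar G (π 0) := by
  rw [EnN]
  refine iSup_le fun k => ?_
  induction k generalizing π with
  | zero => rw [psum_zero, wToN_zero]; exact bot_le
  | succ k ih =>
    rw [psum_succ']
    calc wToN (G.wt (π 0) (π 1) + psum G (shift π) k)
        ≤ gstep (G.wt (π 0) (π 1)) (wToN (psum G (shift π) k)) := wToN_add_le _ _
      _ ≤ gstep (G.wt (π 0) (π 1)) (fstar G (π 1)) :=
          gstep_mono _ (ih (shift_path G hpath) (shift_consMin G hcons))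
      _ = gval G (fstar G) (π 0) (π 1) := rfl
      _ ≤ fstar G (π 0) := fstar_ge_edge G (hpath 0) (fun h => hcons 0 h)

/-! ### canonical plays -/

noncomputable def dfltSucc : V → V := fun v => Classical.choose (G.nosink v)

lemma dfltSucc_edge (v : V) : G.E v (dfltSucc G v) := Classical.choose_spec (G.nosink v)

instance : Nonempty G.MaxStrat := ⟨⟨dfltSucc G, fun v _ => dfltSucc_edge G v⟩⟩
instance : Nonempty G.MinStrat := ⟨⟨dfltSucc G, fun v _ => dfltSucc_edge G v⟩⟩

noncomputable def combineFn (σ : G.MinStrat) (τ : G.MaxStrat) : V → V :=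
  fun x => if G.isMin x then σ.1 x else τ.1 x

noncomputable def playFrom (f : V → V) (v : V) : ℕ → V := fun n => f^[n] v

lemma playFrom_zero (f : V → V) (v : V) : playFrom f v 0 = v := rfl

lemma playFrom_succ (f : V → V) (v : V) (n : ℕ) :
    playFrom f v (n+1) = f (playFrom f v n) := Function.iterate_succ_apply' f n v

noncomputable def combinedPlay (σ : G.MinStrat) (τ : G.MaxStrat) (v : V) : ℕ → V :=
  playFrom (combineFn G σ τ) v

lemma combinedPlay_path (σ : G.MinStrat) (τ : G.MaxStrat) (v : V) :
    G.IsPath (combinedPlay G σ τ v) := by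
  intro i
  rw [combinedPlay, playFrom_succ]
  by_cases h : G.isMin (playFrom (combineFn G σ τ) v i)
  · rw [combineFn, if_pos h]; exact σ.2 _ h
  · rw [combineFn, if_neg h]; exact τ.2 _ h

lemma combinedPlay_consMin (σ : G.MinStrat) (τ : G.MaxStrat) (v : V) :
    G.ConsMin σ (combinedPlay G σ τ v) := by
  intro i h
  rw [combinedPlay] at h ⊢
  rw [playFrom_succ, combineFn, if_pos h]

lemma combinedPlay_consMax (σ : G.MinStrat) (τ : G.MaxStrat) (v : V) :
    G.ConsMax τ (combinedPlay G σ τ v) := by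
  intro i h
  rw [combinedPlay] at h ⊢
  rw [playFrom_succ, combineFn, if_neg h]

instance playsMinNonempty (σ : G.MinStrat) (v : V) : Nonempty (G.PlaysMin σ v) :=
  ⟨⟨combinedPlay G σ (Classical.arbitrary _) v, rfl, combinedPlay_path G _ _ v,
    combinedPlay_consMin G _ _ v⟩⟩

instance playsMaxNonempty (τ : G.MaxStrat) (v : V) : Nonempty (G.PlaysMax τ v) :=
  ⟨⟨combinedPlay G (Classical.arbitrary _) τ v, rfl, combinedPlay_path G _ _ v,
    combinedPlay_consMax G _ _ v⟩⟩

end EnPD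
namespace EnPD

variable {V : Type} (G : Game V (WithTop ℤ))

/-! ### tails and prepending -/

def tl (π : ℕ → V) (K : ℕ) : ℕ → V := fun n => π (K + n)

lemma tl_path {π : ℕ → V} (h : G.IsPath π) (K : ℕ) : G.IsPath (tl π K) :=
  fun i => h (K + i)

lemma tl_consMax {τ : G.MaxStrat} {π : ℕ → V} (h : G.ConsMax τ π) (K : ℕ) :
    G.ConsMax τ (tl π K) := fun i hi => h (K + i) hi

lemma tl_zero (π : ℕ → V) (K : ℕ) : tl π K 0 = π K := rfl

lemma psum_tl (π : ℕ → V) (K j : ℕ) :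
    psum G π (K + j) = psum G π K + psum G (tl π K) j := by
  rw [psum_add]; rfl

def prepend (v : V) (π : ℕ → V) : ℕ → V := fun n =>
  match n with
  | 0 => v
  | k + 1 => π k

lemma shift_prepend (v : V) (π : ℕ → V) : shift (prepend v π) = π := rfl

/-! ### the value of a fixed Max strategy -/

noncomputable def hval (τ : G.MaxStrat) : V → ℕ∞ :=
  fun v => ⨅ π : G.PlaysMax τ v, EnN G π.1

lemma hval_le {τ : G.MaxStrat} {v : V} (π : G.PlaysMax τ v) :
    hval G τ v ≤ EnN G π.1 := by
  rw [hval]; exact iInf_le _ π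

lemma hval_attained (τ : G.MaxStrat) (v : V) :
    ∃ π : G.PlaysMax τ v, EnN G π.1 = hval G τ v :=
  enat_iInf_attained _

lemma hval_tl {τ : G.MaxStrat} {π : ℕ → V} (hpath : G.IsPath π) (hcons : G.ConsMax τ π)
    (K : ℕ) : hval G τ (π K) ≤ EnN G (tl π K) :=
  hval_le G (⟨tl π K, tl_zero π K, tl_path G hpath K, tl_consMax G hcons K⟩ : G.PlaysMax τ (π K))

/-- the one-step inequality for `hval` along allowed moves. -/
lemma hval_step {τ : G.MaxStrat} {x u : V} (hE : G.E x u)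
    (h : G.isMin x ∨ u = τ.1 x) : hval G τ x ≤ gval G (hval G τ) x u := by
  obtain ⟨π₀, hπ₀⟩ := hval_attained G τ u
  set ρ : ℕ → V := prepend x π₀.1 with hρ
  have hρ0 : ρ 0 = x := rfl
  have hρ1 : ρ 1 = u := π₀.2.1
  have hpath : G.IsPath ρ := by
    intro i
    cases i with
    | zero => rw [show ρ 1 = u from hρ1]; exact hE
    | succ k => exact π₀.2.2.1 k
  have hcons : G.ConsMax τ ρ := by
    intro i hi
    cases i with
    | zero =>
      rcases h with hmin | hu
      · exact absurd hmin hi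
      · rw [hρ1, hu, hρ0]
    | succ k => exact π₀.2.2.2 k hi
  have hmem : hval G τ x ≤ EnN G ρ := hval_le G ⟨ρ, hρ0, hpath, hcons⟩
  calc hval G τ x ≤ EnN G ρ := hmem
    _ = gstep (G.wt (ρ 0) (ρ 1)) (EnN G (shift ρ)) := EnN_rec G ρ
    _ = gval G (hval G τ) x u := by
        rw [shift_prepend, hρ0, hρ1, hπ₀, gval]

/-! ### strategy switching -/

noncomputable def switch (τ : G.MaxStrat) (v u : V) (hE : G.E v u) : G.MaxStrat :=
  ⟨fun x => if x = v then u else τ.1 x, by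
    intro x hx
    dsimp only
    by_cases hxv : x = v
    · rw [if_pos hxv, hxv]; exact hE
    · rw [if_neg hxv]; exact τ.2 x hx⟩

lemma switch_eq {τ : G.MaxStrat} {v u : V} {hE : G.E v u} {x : V} (h : x ≠ v) :
    (switch G τ v u hE).1 x = τ.1 x := if_neg h

lemma switch_self {τ : G.MaxStrat} {v u : V} {hE : G.E v u} :
    (switch G τ v u hE).1 v = u := if_pos rfl

section ClaimA

set_option linter.unusedSectionVars false

variable [Fintype V]
variable {τ : G.MaxStrat} {v u : V}

/-- the one-step inequalities along a play consistent with the switched strategy. -/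
lemma claimA_step (hv : ¬ G.isMin v) (hE : G.E v u)
    (himp : hval G τ v < gval G (hval G τ) v u) {π : ℕ → V} (hpath : G.IsPath π)
    (hcons : G.ConsMax (switch G τ v u hE) π) (i : ℕ) :
    hval G τ (π i) ≤ gval G (hval G τ) (π i) (π (i+1)) ∧
      (π i = v → hval G τ (π i) < gval G (hval G τ) (π i) (π (i+1))) := by
  by_cases hmin : G.isMin (π i)
  · refine ⟨hval_step G (hpath i) (Or.inl hmin), fun hiv => ?_⟩
    rw [hiv] at hmin; exact absurd hmin hv
  · have hnext : π (i+1) = (switch G τ v u hE).1 (π i) := hcons i hmin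
    by_cases hiv : π i = v
    · have : π (i+1) = u := by rw [hnext, hiv, switch_self]
      rw [hiv, this]
      exact ⟨le_of_lt himp, fun _ => himp⟩
    · have : π (i+1) = τ.1 (π i) := by rw [hnext, switch_eq G hiv]
      exact ⟨hval_step G (hpath i) (Or.inr this), fun h => absurd h hiv⟩

lemma claimA_q_lt_top (himp : hval G τ v < gval G (hval G τ) v u) : hval G τ v ≠ ⊤ :=
  ne_top_of_lt himp

/-- ⊤-propagation along a play. -/
lemma claimA_topProp (hv : ¬ G.isMin v) (hE : G.E v u)
    (himp : hval G τ v < gval G (hval G τ) v u) {π : ℕ → V} (hpath : G.IsPath π)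
    (hcons : G.ConsMax (switch G τ v u hE) π) (i : ℕ)
    (hq : hval G τ (π i) = ⊤) (hw : G.wt (π i) (π (i+1)) ≠ ⊤) :
    hval G τ (π (i+1)) = ⊤ := by
  have hstep := (claimA_step G hv hE himp hpath hcons i).1
  rw [hq] at hstep
  obtain ⟨z, hz⟩ : ∃ z : ℤ, G.wt (π i) (π (i+1)) = (z : WithTop ℤ) :=
    ⟨(G.wt (π i) (π (i+1))).untop hw, (WithTop.coe_untop _ hw).symm⟩
  rw [gval, hz, gstep_coe] at hstep
  exact (addZ_eq_top_iff _ _).mp (top_le_iff.mp hstep)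

/-- Claim A for plays starting in the `⊤` region. -/
lemma claimA_top (hv : ¬ G.isMin v) (hE : G.E v u)
    (himp : hval G τ v < gval G (hval G τ) v u) {π : ℕ → V} (hpath : G.IsPath π)
    (hcons : G.ConsMax (switch G τ v u hE) π) (hq : hval G τ (π 0) = ⊤) :
    EnN G π = ⊤ := by
  by_cases hwt : ∃ i, G.wt (π i) (π (i+1)) = ⊤
  · obtain ⟨i, hi⟩ := hwt
    exact EnN_top_of_wt_top G π i hi
  push_neg at hwt
  have hall : ∀ i, hval G τ (π i) = ⊤ := by
    intro i
    induction i with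
    | zero => exact hq
    | succ k ih => exact claimA_topProp G hv hE himp hpath hcons k ih (hwt k)
  have hnv : ∀ i, π i ≠ v := by
    intro i hiv
    exact claimA_q_lt_top G himp (hiv ▸ hall i)
  have hconsτ : G.ConsMax τ π := by
    intro i hi
    rw [hcons i hi, switch_eq G (hnv i)]
  have := hval_le G (⟨π, rfl, hpath, hconsτ⟩ : G.PlaysMax τ (π 0))
  rw [hq] at this
  exact top_le_iff.mp this

/-- Claim A: switching to a locally better edge does not hurt anywhere. -/
lemma claimA (hv : ¬ G.isMin v) (hE : G.E v u)
    (himp : hval G τ v < gval G (hval G τ) v u) {π : ℕ → V} (hpath : G.IsPath π)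
    (hcons : G.ConsMax (switch G τ v u hE) π) :
    hval G τ (π 0) ≤ EnN G π := by
  by_contra hcon
  push_neg at hcon
  -- no ⊤ weight can occur along π
  have hwt : ∀ i, G.wt (π i) (π (i+1)) ≠ ⊤ := by
    intro i hi
    rw [EnN_top_of_wt_top G π i hi] at hcon
    exact absurd hcon (not_lt.mpr le_top)
  obtain ⟨z, hz⟩ : ∃ z : ℕ → ℤ, ∀ i, G.wt (π i) (π (i+1)) = ((z i : ℤ) : WithTop ℤ) :=
    ⟨fun i => (G.wt (π i) (π (i+1))).untop (hwt i),
     fun i => (WithTop.coe_untop _ (hwt i)).symm⟩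
  set Z : ℕ → ℤ := fun k => ∑ i ∈ Finset.range k, z i with hZdef
  have hZ : ∀ k, psum G π k = ((Z k : ℤ) : WithTop ℤ) := by
    intro k
    rw [psum, hZdef, WithTop.coe_sum]
    exact Finset.sum_congr rfl fun i _ => hz i
  -- the tails of π are consistent with the switched strategy
  have htl : ∀ K, G.ConsMax (switch G τ v u hE) (tl π K) := fun K => tl_consMax G hcons K
  -- partial sums of tails
  have hZ' : ∀ K j, psum G (tl π K) j = ((∑ i ∈ Finset.range j, z (K + i) : ℤ) : WithTop ℤ) := by
    intro K j
    rw [psum, WithTop.coe_sum]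
    exact Finset.sum_congr rfl fun i _ => hz (K + i)
  have hZadd : ∀ K j, Z (K + j) = Z K + ∑ i ∈ Finset.range j, z (K + i) := by
    intro K j
    rw [hZdef]
    exact Finset.sum_range_add z K j
  -- π never visits the ⊤ region of q
  have hQtop : ∀ K, hval G τ (π K) ≠ ⊤ := by
    intro K hK
    have h1 : EnN G (tl π K) = ⊤ :=
      claimA_top G hv hE himp (tl_path G hpath K) (htl K) (by rw [tl_zero]; exact hK)
    have hEtop : EnN G π = ⊤ := by
      refine enat_eq_top_of_nat_le _ fun m => ?_
      obtain ⟨j, hj⟩ := enat_le_iSup_wit (fun j => wToN (psum G (tl π K) j))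
        (m + (Z K).natAbs) (by rw [← EnN, h1]; exact le_top)
      rw [hZ' K j, wToN_coe] at hj
      set t : ℤ := ∑ i ∈ Finset.range j, z (K + i) with htdef
      have hjt : (m + (Z K).natAbs : ℕ) ≤ t.toNat := by exact_mod_cast hj
      have hs : Z (K + j) = Z K + t := hZadd K j
      have hm : m ≤ (Z (K + j)).toNat := by omega
      calc (m : ℕ∞) ≤ ((Z (K+j)).toNat : ℕ∞) := by exact_mod_cast hm
        _ = wToN (psum G π (K+j)) := by rw [hZ (K+j), wToN_coe]
        _ ≤ EnN G π := EnN_nonneg G π _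
    rw [hEtop] at hcon
    exact absurd hcon (not_lt.mpr le_top)
  set Q : ℕ → ℕ := fun k => (hval G τ (π k)).toNat with hQdef
  have hQ : ∀ k, hval G τ (π k) = ((Q k : ℕ) : ℕ∞) := fun k => (ENat.coe_toNat (hQtop k)).symm
  set c : ℕ := Q 0 with hcdef
  have hc : EnN G π < (c : ℕ∞) := by rw [hcdef, ← hQ 0]; exact hcon
  have hEnZ : ∀ k, (Z k).toNat < c := by
    intro k
    have h1 : wToN (psum G π k) ≤ EnN G π := EnN_nonneg G π k
    rw [hZ k, wToN_coe] at h1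
    have := lt_of_le_of_lt h1 hc
    exact_mod_cast this
  have hc0 : 0 < c := by have := hEnZ 0; omega
  -- the integer one-step inequality
  have intStep : ∀ k, (Q k : ℤ) + (if π k = v then 1 else 0) ≤ 0 ⊔ ((Q (k+1) : ℤ) + z k) := by
    intro k
    obtain ⟨hle, hlt⟩ := claimA_step G hv hE himp hpath hcons k
    rw [gval, hz k, gstep_coe, hQ (k+1), addZ_coe, hQ k] at hle hlt
    have h1 : Q k ≤ ((Q (k+1) : ℤ) + z k).toNat := by exact_mod_cast hle
    by_cases hkv : π k = v
    · have h2 : ((Q k : ℕ∞)) < ((((Q (k+1) : ℤ) + z k).toNat : ℕ) : ℕ∞) := hlt hkv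
      have h3 : Q k < ((Q (k+1) : ℤ) + z k).toNat := by exact_mod_cast h2
      rw [if_pos hkv]
      omega
    · rw [if_neg hkv]
      omega
  set m : ℕ → ℕ := fun k => ∑ i ∈ Finset.range k, (if π i = v then 1 else 0) with hmdef
  have hmsucc : ∀ k, m (k+1) = m k + (if π k = v then 1 else 0) := by
    intro k; rw [hmdef]; exact Finset.sum_range_succ _ k
  have hmmono : Monotone m := by
    intro a b hab
    exact Finset.sum_le_sum_of_subset (Finset.range_subset_range.mpr hab)
  -- the central invariant
  have H : ∀ k, (c : ℤ) + m k ≤ Z k + Q k := by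
    intro k
    induction k with
    | zero =>
      have : m 0 = 0 := by rw [hmdef]; simp
      have hZ0 : Z 0 = 0 := by rw [hZdef]; simp
      rw [this, hZ0, hcdef]
      omega
    | succ k ih =>
      have is := intStep k
      have hZs : Z (k+1) = Z k + z k := by rw [hZdef]; exact Finset.sum_range_succ _ k
      have hms := hmsucc k
      have hE0 := hEnZ k
      by_cases hkv : π k = v
      · rw [if_pos hkv] at is hms
        rcases le_or_gt ((Q (k+1) : ℤ) + z k) 0 with hle | hpos
        · rw [sup_eq_left.mpr hle] at is; omega
        · rw [sup_eq_right.mpr hpos.le] at is; omega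
      · rw [if_neg hkv] at is hms
        rcases le_or_gt ((Q (k+1) : ℤ) + z k) 0 with hle | hpos
        · rw [sup_eq_left.mpr hle] at is; omega
        · rw [sup_eq_right.mpr hpos.le] at is; omega
  set M : ℕ := Finset.univ.sup (fun w : V => (hval G τ w).toNat) with hMdef
  have hM : ∀ k, Q k ≤ M := by
    intro k
    exact Finset.le_sup (f := fun w : V => (hval G τ w).toNat) (Finset.mem_univ (π k))
  by_cases hvis : ∀ K, ∃ i, K ≤ i ∧ π i = v
  · -- v is visited infinitely often: the sums grow unboundedly
    have grow : ∀ N, ∃ k, N ≤ m k := by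
      intro N
      induction N with
      | zero => exact ⟨0, Nat.zero_le _⟩
      | succ N ihN =>
        obtain ⟨k, hk⟩ := ihN
        obtain ⟨i, hki, hiv⟩ := hvis k
        refine ⟨i + 1, ?_⟩
        have : m (i+1) = m i + 1 := by rw [hmsucc i, if_pos hiv]
        have := hmmono hki
        omega
    obtain ⟨k, hk⟩ := grow (M + 1)
    have := H k
    have := hM k
    have := hEnZ k
    omega
  · -- v is visited finitely often: the tail is consistent with τ
    push_neg at hvis
    obtain ⟨K, hKv⟩ := hvis
    have hconsτK : G.ConsMax τ (tl π K) := by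
      intro i hi
      have h1 := htl K i hi
      rw [h1]
      exact switch_eq G (hKv (K+i) (Nat.le_add_right K i))
    have hq_le : ((Q K : ℕ) : ℕ∞) ≤ EnN G (tl π K) := by
      rw [← hQ K]
      exact hval_le G ⟨tl π K, tl_zero π K, tl_path G hpath K, hconsτK⟩
    obtain ⟨j, hj⟩ := enat_le_iSup_wit (fun j => wToN (psum G (tl π K) j)) (Q K)
      (by rw [← EnN]; exact hq_le)
    rw [hZ' K j, wToN_coe] at hj
    set t : ℤ := ∑ i ∈ Finset.range j, z (K + i) with htdef
    have hjt : Q K ≤ t.toNat := by exact_mod_cast hj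
    have hs : Z (K + j) = Z K + t := hZadd K j
    have hHK := H K
    have h1 := hEnZ (K + j)
    have h2 := hEnZ K
    omega

end ClaimA

end EnPD
namespace EnPD

set_option linter.unusedSectionVars false

variable {V : Type} [Fintype V] (G : Game V (WithTop ℤ))

lemma exists_tau0 : ∃ τ₀ : G.MaxStrat,
    ∀ τ : G.MaxStrat, hval G τ₀ ≤ hval G τ → hval G τ = hval G τ₀ := by
  haveI : Finite G.MaxStrat :=
    Finite.of_injective (fun τ : G.MaxStrat => (τ.1 : V → V)) (fun a b h => Subtype.ext h)
  obtain ⟨τ₀, -, hmax⟩ := Set.Finite.exists_maximalFor (hval G) Set.univ Set.finite_univ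
    ⟨Classical.arbitrary _, trivial⟩
  exact ⟨τ₀, fun τ h => le_antisymm (hmax trivial h) h⟩

noncomputable def tau0 : G.MaxStrat := Classical.choose (exists_tau0 G)

lemma tau0_spec : ∀ τ : G.MaxStrat, hval G (tau0 G) ≤ hval G τ → hval G τ = hval G (tau0 G) :=
  Classical.choose_spec (exists_tau0 G)

lemma tl_one_eq_shift (π : ℕ → V) : tl π 1 = shift π :=
  funext fun n => congrArg π (Nat.add_comm 1 n)

/-- `hval (tau0 G)` is a pre-fixed point of the value operator. -/
lemma tau0_prefix : Fop G (hval G (tau0 G)) ≤ hval G (tau0 G) := by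
  intro x
  show (if G.isMin x then ⨅ u : {u // G.E x u}, gval G (hval G (tau0 G)) x u
        else ⨆ u : {u // G.E x u}, gval G (hval G (tau0 G)) x u) ≤ hval G (tau0 G) x
  by_cases h : G.isMin x
  · rw [if_pos h]
    obtain ⟨π, hπ⟩ := hval_attained G (tau0 G) x
    have h0 : π.1 0 = x := π.2.1
    have hedge : G.E x (π.1 1) := by
      have := π.2.2.1 0
      rwa [h0] at this
    have htail : hval G (tau0 G) (π.1 1) ≤ EnN G (shift π.1) := by
      rw [← tl_one_eq_shift]
      exact hval_tl G π.2.2.1 π.2.2.2 1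
    calc ⨅ u : {u // G.E x u}, gval G (hval G (tau0 G)) x u
        ≤ gval G (hval G (tau0 G)) x (π.1 1) := iInf_le _ (⟨π.1 1, hedge⟩ : {u // G.E x u})
      _ = gstep (G.wt x (π.1 1)) (hval G (tau0 G) (π.1 1)) := rfl
      _ ≤ gstep (G.wt x (π.1 1)) (EnN G (shift π.1)) := gstep_mono _ htail
      _ = gstep (G.wt (π.1 0) (π.1 1)) (EnN G (shift π.1)) := by rw [h0]
      _ = EnN G π.1 := (EnN_rec G π.1).symm
      _ = hval G (tau0 G) x := hπ
  · rw [if_neg h]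
    refine iSup_le fun w => ?_
    obtain ⟨u, hEu⟩ := w
    by_contra hgt
    have himp : hval G (tau0 G) x < gval G (hval G (tau0 G)) x u := not_le.mp hgt
    set τ' : G.MaxStrat := switch G (tau0 G) x u hEu with hτ'
    have hge : hval G (tau0 G) ≤ hval G τ' := by
      intro y
      refine le_iInf fun π => ?_
      have := claimA G h hEu himp π.2.2.1 π.2.2.2
      rwa [π.2.1] at this
    have hstrict : gval G (hval G (tau0 G)) x u ≤ hval G τ' x := by
      refine le_iInf fun π => ?_
      have h0 : π.1 0 = x := π.2.1
      have h1 : π.1 1 = u := by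
        have h2 := π.2.2.2 0 (by rw [h0]; exact h)
        rw [h2, h0, hτ']
        exact switch_self G
      have htail : hval G τ' u ≤ EnN G (shift π.1) := by
        rw [← tl_one_eq_shift, ← h1]
        exact hval_tl G π.2.2.1 π.2.2.2 1
      calc gval G (hval G (tau0 G)) x u
          = gstep (G.wt x u) (hval G (tau0 G) u) := rfl
        _ ≤ gstep (G.wt x u) (hval G τ' u) := gstep_mono _ (hge u)
        _ ≤ gstep (G.wt x u) (EnN G (shift π.1)) := gstep_mono _ htail
        _ = gstep (G.wt (π.1 0) (π.1 1)) (EnN G (shift π.1)) := by rw [h0, h1]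
        _ = EnN G π.1 := (EnN_rec G π.1).symm
    have heq : hval G τ' = hval G (tau0 G) := tau0_spec G τ' hge
    rw [heq] at hstrict
    exact absurd hstrict (not_le.mpr himp)

lemma fstar_le_hval : fstar G ≤ hval G (tau0 G) :=
  fstar_le_of_prefix G (tau0_prefix G)

/-- weak determinacy at the `ℕ∞` level. -/
lemma weakdet (σ : G.MinStrat) (τ : G.MaxStrat) (v : V) :
    (⨅ π : G.PlaysMax τ v, EnN G π.1) ≤ ⨆ π : G.PlaysMin σ v, EnN G π.1 := by
  refine le_trans (iInf_le _ (⟨combinedPlay G σ τ v, rfl, combinedPlay_path G σ τ v,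
    combinedPlay_consMax G σ τ v⟩ : G.PlaysMax τ v)) ?_
  exact le_iSup_of_le (⟨combinedPlay G σ τ v, rfl, combinedPlay_path G σ τ v,
    combinedPlay_consMin G σ τ v⟩ : G.PlaysMin σ v) le_rfl

end EnPD
namespace EnPD

variable {V : Type}

/-! ### the bridge between the `ℕ∞`-valued and the `EReal`-valued energy -/

@[simp] lemma toE_top : toE (⊤ : WithTop ℤ) = ⊤ := by simp [toE]

@[simp] lemma toE_coe (z : ℤ) : toE (z : WithTop ℤ) = ((z : ℝ) : EReal) := by
  rw [toE, dif_neg WithTop.coe_ne_top]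
  simp

lemma toE_zero : toE (0 : WithTop ℤ) = 0 := by
  have : ((0:ℤ) : WithTop ℤ) = 0 := rfl
  rw [← this, toE_coe]
  simp

lemma toE_ne_bot (x : WithTop ℤ) : toE x ≠ ⊥ := by
  rcases eq_or_ne x ⊤ with rfl | hx
  · simp
  · lift x to ℤ using hx
    rw [toE_coe]
    exact EReal.coe_ne_bot _

lemma toE_add (a b : WithTop ℤ) : toE (a + b) = toE a + toE b := by
  rcases eq_or_ne a ⊤ with rfl | ha
  · rw [WithTop.top_add, toE_top, EReal.top_add_of_ne_bot (toE_ne_bot b)]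
  rcases eq_or_ne b ⊤ with rfl | hb
  · rw [WithTop.add_top, toE_top]
    exact (EReal.add_top_of_ne_bot (toE_ne_bot a)).symm
  lift a to ℤ using ha
  lift b to ℤ using hb
  rw [← WithTop.coe_add, toE_coe, toE_coe, toE_coe]
  push_cast
  rfl

lemma toE_psum (G : Game V (WithTop ℤ)) (π : ℕ → V) (k : ℕ) :
    (∑ i ∈ Finset.range k, toE (G.wseq π i)) = toE (psum G π k) := by
  induction k with
  | zero => rw [Finset.sum_range_zero, psum_zero, toE_zero]
  | succ k ih =>
    rw [Finset.sum_range_succ, ih, psum_succ, toE_add]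
    rfl

lemma e_wToN (x : WithTop ℤ) : e (wToN x) = 0 ⊔ toE x := by
  rcases eq_or_ne x ⊤ with rfl | hx
  · rw [wToN_top, e_top, toE_top]
    exact (sup_of_le_right le_top).symm
  · lift x to ℤ using hx
    rw [wToN_coe, e_coe, toE_coe]
    rcases le_or_gt 0 x with hx0 | hx0
    · have h1 : ((x.toNat : ℕ) : ℝ) = (x : ℝ) := by
        exact_mod_cast congrArg (fun t : ℤ => (t : ℝ)) (Int.toNat_of_nonneg hx0)
      have h2 : (0 : EReal) ≤ ((x:ℝ) : EReal) := by
        have : ((0:ℝ) : EReal) ≤ ((x:ℝ) : EReal) :=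
          EReal.coe_le_coe_iff.mpr (by exact_mod_cast hx0)
        simpa using this
      rw [h1, sup_of_le_right h2]
    · have h1 : ((x.toNat : ℕ) : ℝ) = 0 := by
        rw [Int.toNat_of_nonpos hx0.le]
        simp
      have h2 : ((x:ℝ) : EReal) ≤ 0 := by
        have : ((x:ℝ) : EReal) ≤ ((0:ℝ) : EReal) :=
          EReal.coe_le_coe_iff.mpr (by exact_mod_cast hx0.le)
        simpa using this
      rw [h1, sup_of_le_left h2]
      simp

/-- the `EReal`-valued energy of a play is the embedding of its `ℕ∞`-valued energy. -/
lemma En_eq (G : Game V (WithTop ℤ)) (π : ℕ → V) :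
    En (fun i => toE (G.wseq π i)) = e (EnN G π) := by
  rw [En, EnN, e_iSup]
  calc (⨆ k, ∑ i ∈ Finset.range k, toE (G.wseq π i))
      = ⨆ k, toE (psum G π k) := iSup_congr fun k => toE_psum G π k
    _ = 0 ⊔ ⨆ k, toE (psum G π k) := by
        refine (sup_of_le_right ?_).symm
        refine le_trans (le_of_eq toE_zero.symm) ?_
        refine le_trans (le_of_eq (congrArg toE (psum_zero G π).symm)) ?_
        exact le_iSup_of_le 0 le_rfl
    _ = (⨆ _ : ℕ, (0:EReal)) ⊔ ⨆ k, toE (psum G π k) := by rw [iSup_const]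
    _ = ⨆ k, (0 ⊔ toE (psum G π k)) := (iSup_sup_eq).symm
    _ = ⨆ k, e (wToN (psum G π k)) := iSup_congr fun k => (e_wToN _).symm

end EnPD

open Game

open EnPD in
/-- Positional determinacy of energy games. -/
theorem en_positional_determinacy {V : Type} [Fintype V] (G : Game V (WithTop ℤ)) :
    ∃ (σ₀ : G.MinStrat) (τ₀ : G.MaxStrat), ∀ v : V,
      (⨆ π : G.PlaysMin σ₀ v, En (fun i => toE (G.wseq π.1 i)))
          = (⨅ σ : G.MinStrat, ⨆ π : G.PlaysMin σ v, En (fun i => toE (G.wseq π.1 i))) ∧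
      (⨅ σ : G.MinStrat, ⨆ π : G.PlaysMin σ v, En (fun i => toE (G.wseq π.1 i)))
          = (⨆ τ : G.MaxStrat, ⨅ π : G.PlaysMax τ v, En (fun i => toE (G.wseq π.1 i))) ∧
      (⨆ τ : G.MaxStrat, ⨅ π : G.PlaysMax τ v, En (fun i => toE (G.wseq π.1 i)))
          = (⨅ π : G.PlaysMax τ₀ v, En (fun i => toE (G.wseq π.1 i))) := by
  refine ⟨sigma0 G, tau0 G, fun v => ?_⟩
  -- the `ℕ∞`-valued analogues of the four quantities
  set AN : ℕ∞ := ⨆ π : G.PlaysMin (sigma0 G) v, EnN G π.1 with hANdef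
  set BN : ℕ∞ := ⨅ σ : G.MinStrat, ⨆ π : G.PlaysMin σ v, EnN G π.1 with hBNdef
  set CN : ℕ∞ := ⨆ τ : G.MaxStrat, ⨅ π : G.PlaysMax τ v, EnN G π.1 with hCNdef
  set DN : ℕ∞ := ⨅ π : G.PlaysMax (tau0 G) v, EnN G π.1 with hDNdef
  have hBA : BN ≤ AN := iInf_le _ (sigma0 G)
  have hAf : AN ≤ fstar G v := by
    rw [hANdef]
    refine iSup_le fun π => ?_
    have := upper_bound G π.2.2.1 π.2.2.2
    rwa [π.2.1] at this
  have hfD : fstar G v ≤ DN := fstar_le_hval G v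
  have hDC : DN ≤ CN := le_iSup_of_le (tau0 G) le_rfl
  have hCB : CN ≤ BN := by
    rw [hCNdef, hBNdef]
    exact iSup_le fun τ => le_iInf fun σ => weakdet G σ τ v
  have e1 : AN = BN :=
    le_antisymm (le_trans hAf (le_trans hfD (le_trans hDC hCB))) hBA
  have e2 : BN = CN :=
    le_antisymm (le_trans hBA (le_trans hAf (le_trans hfD hDC))) hCB
  have e3 : CN = DN :=
    le_antisymm (le_trans hCB (le_trans hBA (le_trans hAf hfD))) hDC
  -- the bridge to the `EReal`-valued quantities
  have bA : (⨆ π : G.PlaysMin (sigma0 G) v, En (fun i => toE (G.wseq π.1 i))) = e AN := by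
    rw [hANdef, e_iSup]
    exact iSup_congr fun π => En_eq G π.1
  have bB : (⨅ σ : G.MinStrat, ⨆ π : G.PlaysMin σ v, En (fun i => toE (G.wseq π.1 i)))
      = e BN := by
    rw [hBNdef, e_iInf]
    refine iInf_congr fun σ => ?_
    rw [e_iSup]
    exact iSup_congr fun π => En_eq G π.1
  have bC : (⨆ τ : G.MaxStrat, ⨅ π : G.PlaysMax τ v, En (fun i => toE (G.wseq π.1 i)))
      = e CN := by
    rw [hCNdef, e_iSup]
    refine iSup_congr fun τ => ?_
    rw [e_iInf]
    exact iInf_congr fun π => En_eq G π.1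
  have bD : (⨅ π : G.PlaysMax (tau0 G) v, En (fun i => toE (G.wseq π.1 i))) = e DN := by
    rw [hDNdef, e_iInf]
    exact iInf_congr fun π => En_eq G π.1
  refine ⟨?_, ?_, ?_⟩
  · rw [bA, bB]; exact congrArg e e1
  · rw [bB, bC]; exact congrArg e e2
  · rw [bC, bD]; exact congrArg e e3
end

section
/- Positional determinacy of positive-energy games: for every game G = (V, E, w, V_Min, V_Max) with weights in ℤ ∪ {∞}, there exist a strategy σ₀ for Min and a strategy τ₀ for Max such that for every vertex v ∈ V, sup over infinite paths π from v consistent with σ₀ of En⁺(w(π)) = inf over Min strategies σ of sup over infinite paths π from v consistent with σ of En⁺(w(π)) = sup over Max strategies τ of inf over infinite paths π from v consistent with τ of En⁺(w(π)) = inf over infinite paths π from v consistent with τ₀ of En⁺(w(π)). -/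
attribute [local instance] Classical.propDecidable

open Game


-- ENat helpers
lemma ENat.exists_eq_iSup' (f : ℕ → ℕ∞) (h : ⨆ n, f n ≠ ⊤) : ∃ n, f n = ⨆ n, f n := by
  by_contra hc
  push_neg at hc
  cases hS : ⨆ n, f n with
  | top => exact h hS
  | coe m =>
    cases m with
    | zero =>
      refine hc 0 ?_
      rw [hS]
      exact le_antisymm (by rw [← hS]; exact le_iSup f 0) (zero_le)
    | succ m =>
      have hb : ∀ n, f n ≤ (m:ℕ∞) := by
        intro n
        have h1 : f n < ((m+1 : ℕ) : ℕ∞) := by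
          rw [← hS]; exact lt_of_le_of_ne (le_iSup f n) (fun e => hc n (by rw [e, hS]))
        cases hfn : f n with
        | top => rw [hfn] at h1; exact absurd h1 (by simp)
        | coe b =>
          rw [hfn] at h1
          exact_mod_cast Nat.lt_succ_iff.mp (by exact_mod_cast h1)
      have h2 : (⨆ n, f n) ≤ (m:ℕ∞) := iSup_le hb
      rw [hS] at h2
      exact absurd h2 (by exact_mod_cast Nat.not_succ_le_self m)

lemma ENat.eq_top_of_forall_le (x : ℕ∞) (h : ∀ c : ℕ, (c:ℕ∞) ≤ x) : x = ⊤ := by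
  cases x with
  | top => rfl
  | coe m => exact absurd (h (m+1)) (by exact_mod_cast Nat.not_succ_le_self m)

lemma iSup_shift (K : ℕ) (f : ℕ → ℕ∞) (h : Monotone f) : ⨆ k, f k = ⨆ k, f (K + k) :=
  le_antisymm (iSup_le fun k => le_trans (h (Nat.le_add_left k K)) (le_iSup (fun k => f (K+k)) k))
    (iSup_le fun k => le_iSup f (K+k))

lemma iInf_iSup_exchange {ι : Type} [Finite ι] [Nonempty ι] (g : ι → ℕ → ℕ∞)
    (hg : ∀ u, Monotone (g u)) : ⨅ u, ⨆ n, g u n = ⨆ n, ⨅ u, g u n := by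
  refine le_antisymm ?_ (iSup_le fun n => le_iInf fun u => le_trans (iInf_le _ u) (le_iSup _ n))
  by_contra hlt
  push_neg at hlt
  set R := ⨆ n, ⨅ u, g u n with hR
  have h1 : ∀ u, R < ⨆ n, g u n := fun u => lt_of_lt_of_le hlt (iInf_le _ u)
  have h2 : ∀ u, ∃ n, R < g u n := fun u => lt_iSup_iff.mp (h1 u)
  choose nu hnu using h2
  obtain ⟨u1, hu1⟩ := Finite.exists_max nu
  have h3 : ∀ u, R < g u (nu u1) := fun u => lt_of_lt_of_le (hnu u) (hg u (hu1 u))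
  obtain ⟨u0, hu0⟩ := Finite.exists_min (fun u => g u (nu u1))
  have h4 : R < ⨅ u, g u (nu u1) :=
    lt_of_lt_of_le (h3 u0) (le_iInf hu0)
  have h5 : (⨅ u, g u (nu u1)) ≤ R := le_iSup (fun n => ⨅ u, g u n) (nu u1)
  exact absurd (lt_of_lt_of_le h4 h5) (lt_irrefl R)

lemma mono_finite_eventually_const (g : ℕ → ℕ∞) (hm : Monotone g) (hf : (Set.range g).Finite) :
    ∃ N, ∀ n ≥ N, g n = g N := by
  obtain ⟨b, hb, hmax⟩ := Set.Finite.exists_maximalFor id _ hf ⟨g 0, ⟨0, rfl⟩⟩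
  obtain ⟨N, rfl⟩ := hb
  exact ⟨N, fun n hn => le_antisymm (hmax ⟨n, rfl⟩ (hm hn)) (hm hn)⟩
noncomputable section
namespace EnPP
open Game

lemma wToN_top : wToN (⊤ : WithTop ℤ) = ⊤ := dif_pos rfl

lemma wToN_coe (a : ℤ) : wToN (a : WithTop ℤ) = (a.toNat : ℕ∞) := by
  rw [wToN, dif_neg (WithTop.coe_ne_top)]
  simp

lemma wToN_eq_top {w : WithTop ℤ} : wToN w = ⊤ ↔ w = ⊤ := by
  induction w using WithTop.recTopCoe with
  | top => simp [wToN_top]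
  | coe a => simp [wToN_coe]

lemma wToN_zero : wToN (0 : WithTop ℤ) = 0 := by
  have : ((0:ℤ) : WithTop ℤ) = 0 := rfl
  rw [← this, wToN_coe]; simp

lemma one_le_wToN {w : WithTop ℤ} (h1 : ¬ w < 0) (h2 : w ≠ 0) : 1 ≤ wToN w := by
  induction w using WithTop.recTopCoe with
  | top => rw [wToN_top]; exact le_top
  | coe a =>
    rw [wToN_coe]
    have ha : ¬ (a < 0) := fun h => h1 (by exact_mod_cast h)
    have ha2 : a ≠ 0 := fun h => h2 (by exact_mod_cast h)
    have : 1 ≤ a.toNat := by omega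
    exact_mod_cast this

/-- one step of value propagation -/
def step (w : WithTop ℤ) (x : ℕ∞) : ℕ∞ := if w < 0 then 0 else wToN w + x

lemma step_of_neg {w : WithTop ℤ} (h : w < 0) (x : ℕ∞) : step w x = 0 := if_pos h
lemma step_of_nonneg {w : WithTop ℤ} (h : ¬ w < 0) (x : ℕ∞) : step w x = wToN w + x := if_neg h

lemma step_mono (w : WithTop ℤ) : Monotone (step w) := fun x y h => by
  unfold step; split
  · exact le_refl 0
  · exact add_le_add_right h _

lemma step_iSup (w : WithTop ℤ) (f : ℕ → ℕ∞) : step w (⨆ n, f n) = ⨆ n, step w (f n) := by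
  unfold step; split
  · simp
  · exact ENat.add_iSup f

-- EnP API
lemma EnP_of_neg {w : ℕ → WithTop ℤ} (h : ∃ k, w k < 0) :
    EnP w = ∑ i ∈ Finset.range (Nat.find h), wToN (w i) := dif_pos h

lemma EnP_of_nonneg {w : ℕ → WithTop ℤ} (h : ¬ ∃ k, w k < 0) :
    EnP w = ⨆ k, ∑ i ∈ Finset.range k, wToN (w i) := dif_neg h

lemma sum_wToN_mono (w : ℕ → WithTop ℤ) : Monotone (fun k => ∑ i ∈ Finset.range k, wToN (w i)) :=
  fun a b h => Finset.sum_le_sum_of_subset (Finset.range_subset_range.mpr h)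

lemma EnP_split (w : ℕ → WithTop ℤ) (K : ℕ) (h : ∀ i < K, ¬ w i < 0) :
    EnP w = (∑ i ∈ Finset.range K, wToN (w i)) + EnP (fun j => w (K + j)) := by
  by_cases hn : ∃ k, w k < 0
  · have hK : K ≤ Nat.find hn := by
      by_contra hlt; push_neg at hlt; exact h _ hlt (Nat.find_spec hn)
    have hn' : ∃ j, w (K + j) < 0 :=
      ⟨Nat.find hn - K, by rw [Nat.add_sub_cancel' hK]; exact Nat.find_spec hn⟩
    have hfind' : Nat.find hn' = Nat.find hn - K := by
      rw [Nat.find_eq_iff]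
      constructor
      · rw [Nat.add_sub_cancel' hK]; exact Nat.find_spec hn
      · intro m hm hneg
        exact Nat.find_min hn (by omega) hneg
    rw [EnP_of_neg hn, EnP_of_neg hn', hfind']
    have heq : Nat.find hn = K + (Nat.find hn - K) := by omega
    calc ∑ i ∈ Finset.range (Nat.find hn), wToN (w i)
        = ∑ i ∈ Finset.range (K + (Nat.find hn - K)), wToN (w i) := by rw [← heq]
      _ = _ := Finset.sum_range_add _ K _
  · have hn' : ¬ ∃ j, w (K + j) < 0 := fun ⟨j, hj⟩ => hn ⟨K + j, hj⟩
    rw [EnP_of_nonneg hn, EnP_of_nonneg hn']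
    rw [iSup_shift K _ (sum_wToN_mono w)]
    have : ∀ k, (∑ i ∈ Finset.range (K + k), wToN (w i))
        = (∑ i ∈ Finset.range K, wToN (w i)) + ∑ j ∈ Finset.range k, wToN (w (K + j)) :=
      fun k => Finset.sum_range_add _ K k
    rw [iSup_congr this, ← ENat.add_iSup]

lemma EnP_partial_le (w : ℕ → WithTop ℤ) (K : ℕ) (h : ∀ i < K, ¬ w i < 0) :
    (∑ i ∈ Finset.range K, wToN (w i)) ≤ EnP w := by
  rw [EnP_split w K h]; exact le_self_add

lemma EnP_top_of_top (w : ℕ → WithTop ℤ) (t : ℕ) (h : ∀ i ≤ t, ¬ w i < 0) (ht : w t = ⊤) :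
    EnP w = ⊤ := by
  have h1 : (∑ i ∈ Finset.range (t+1), wToN (w i)) = ⊤ := by
    refine top_le_iff.mp ?_
    have : wToN (w t) = ⊤ := wToN_eq_top.mpr ht
    exact this ▸ Finset.single_le_sum (f := fun i => wToN (w i)) (fun j _ => zero_le)
      (Finset.self_mem_range_succ t)
  refine top_le_iff.mp ?_
  calc (⊤:ℕ∞) = ∑ i ∈ Finset.range (t+1), wToN (w i) := h1.symm
    _ ≤ EnP w := EnP_partial_le w (t+1) (fun i hi => h i (by omega))

end EnPP
namespace EnPP
open Game

variable {V : Type} [Fintype V] (G : Game V (WithTop ℤ))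

instance edgesNonempty (v : V) : Nonempty {u // G.E v u} :=
  (G.nosink v).elim fun u hu => ⟨⟨u, hu⟩⟩

/-- The value-iteration operator. -/
def F (x : V → ℕ∞) (v : V) : ℕ∞ :=
  if G.isMin v then ⨅ u : {u // G.E v u}, step (G.wt v u.1) (x u.1)
  else ⨆ u : {u // G.E v u}, step (G.wt v u.1) (x u.1)

lemma F_mono : Monotone (F G) := by
  intro x y h v
  unfold F
  split
  · exact le_iInf fun u => le_trans (iInf_le _ u) (step_mono _ (h u.1))
  · exact iSup_le fun u => le_trans (step_mono _ (h u.1))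
      (le_iSup (fun u : {u // G.E v u} => step (G.wt v u.1) (y u.1)) u)

/-- finite iterates of `F` from `⊥` -/
def vseq : ℕ → V → ℕ∞
  | 0 => fun _ => 0
  | n+1 => F G (vseq n)

lemma vseq_mono : Monotone (vseq G) := by
  refine monotone_nat_of_le_succ ?_
  intro n
  induction n with
  | zero => exact fun v => zero_le
  | succ n ih => exact F_mono G ih

/-- the value function: least fixed point of `F` -/
def val (v : V) : ℕ∞ := ⨆ n, vseq G n v

lemma vseq_le_val (n : ℕ) (v : V) : vseq G n v ≤ val G v := le_iSup (fun n => vseq G n v) n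

lemma F_val : F G (val G) = val G := by
  funext v
  have hmono : ∀ u : {u // G.E v u}, Monotone (fun n => step (G.wt v u.1) (vseq G n u.1)) :=
    fun u a b h => step_mono _ (vseq_mono G h u.1)
  have hstep : ∀ u : {u // G.E v u}, step (G.wt v u.1) (val G u.1)
      = ⨆ n, step (G.wt v u.1) (vseq G n u.1) := fun u => step_iSup _ _
  have hshift : (⨆ n, vseq G (n+1) v) = val G v := by
    refine le_antisymm (iSup_le fun n => vseq_le_val G (n+1) v) (iSup_le fun n => ?_)
    exact le_trans (vseq_mono G (Nat.le_succ n) v) (le_iSup (fun n => vseq G (n+1) v) n)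
  by_cases hm : G.isMin v
  · rw [F, if_pos hm, iInf_congr hstep, iInf_iSup_exchange _ hmono]
    have hv : ∀ n, (⨅ u : {u // G.E v u}, step (G.wt v u.1) (vseq G n u.1)) = vseq G (n+1) v := by
      intro n
      show _ = F G (vseq G n) v
      rw [F, if_pos hm]
    rw [iSup_congr hv]
    exact hshift
  · rw [F, if_neg hm, iSup_congr hstep, iSup_comm]
    have hv : ∀ n, (⨆ u : {u // G.E v u}, step (G.wt v u.1) (vseq G n u.1)) = vseq G (n+1) v := by
      intro n
      show _ = F G (vseq G n) v
      rw [F, if_neg hm]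
    rw [iSup_congr hv]
    exact hshift

lemma val_le_of_prefixed (x : V → ℕ∞) (hx : ∀ v, F G x v ≤ x v) : ∀ v, val G v ≤ x v := by
  have h : ∀ n v, vseq G n v ≤ x v := by
    intro n
    induction n with
    | zero => exact fun v => zero_le
    | succ n ih => exact fun v => le_trans (F_mono G ih v) (hx v)
  exact fun v => iSup_le fun n => h n v

-- edge relations
lemma min_edge_le (v : V) (hm : G.isMin v) (u : V) (hu : G.E v u) (x : V → ℕ∞) :
    F G x v ≤ step (G.wt v u) (x u) := by
  rw [F, if_pos hm]
  exact iInf_le (fun u : {u // G.E v u} => step (G.wt v u.1) (x u.1)) ⟨u, hu⟩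

lemma max_edge_ge (v : V) (hm : ¬ G.isMin v) (u : V) (hu : G.E v u) (x : V → ℕ∞) :
    step (G.wt v u) (x u) ≤ F G x v := by
  rw [F, if_neg hm]; exact le_iSup (fun u : {u // G.E v u} => step (G.wt v u.1) (x u.1)) ⟨u, hu⟩

lemma val_min_edge_le (v : V) (hm : G.isMin v) (u : V) (hu : G.E v u) :
    val G v ≤ step (G.wt v u) (val G u) := by
  conv_lhs => rw [← F_val G]
  exact min_edge_le G v hm u hu _

lemma val_max_edge_ge (v : V) (hm : ¬ G.isMin v) (u : V) (hu : G.E v u) :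
    step (G.wt v u) (val G u) ≤ val G v := by
  conv_rhs => rw [← F_val G]
  exact max_edge_ge G v hm u hu _

end EnPP
namespace EnPP
open Game

variable {V : Type} [Fintype V] (G : Game V (WithTop ℤ))

/-- rank: first iterate attaining the value (when finite) -/
def rank (v : V) : ℕ :=
  if h : ∃ n, vseq G n v = val G v then Nat.find h else 0

lemma rank_spec (v : V) (hT : val G v ≠ ⊤) : vseq G (rank G v) v = val G v := by
  have h : ∃ n, vseq G n v = val G v := ENat.exists_eq_iSup' _ hT
  rw [rank, dif_pos h]
  exact Nat.find_spec h

lemma rank_le (v : V) (n : ℕ) (h : vseq G n v = val G v) : rank G v ≤ n := by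
  rw [rank, dif_pos ⟨n, h⟩]
  exact Nat.find_le h

lemma rank_pos (v : V) (h0 : val G v ≠ 0) (hT : val G v ≠ ⊤) : 1 ≤ rank G v := by
  by_contra h
  push_neg at h
  have hr : rank G v = 0 := by omega
  have hs := rank_spec G v hT
  rw [hr] at hs
  exact h0 (by rw [← hs]; rfl)

/-- the optimal Min strategy -/
def sigma0 (v : V) : V :=
  if G.isMin v then
    ((Finite.exists_min (fun u : {u // G.E v u} => step (G.wt v u.1) (val G u.1))).choose : {u // G.E v u}).1
  else (G.nosink v).choose

lemma sigma0_edge (v : V) : G.E v (sigma0 G v) := by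
  rw [sigma0]
  split
  · exact ((Finite.exists_min (fun u : {u // G.E v u} => step (G.wt v u.1) (val G u.1))).choose).2
  · exact (G.nosink v).choose_spec

lemma val_sigma0 (v : V) (hm : G.isMin v) :
    val G v = step (G.wt v (sigma0 G v)) (val G (sigma0 G v)) := by
  have hmin := (Finite.exists_min (fun u : {u // G.E v u} => step (G.wt v u.1) (val G u.1))).choose_spec
  set u0 := (Finite.exists_min (fun u : {u // G.E v u} => step (G.wt v u.1) (val G u.1))).choose
  have h1 : val G v = ⨅ u : {u // G.E v u}, step (G.wt v u.1) (val G u.1) := by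
    conv_lhs => rw [← F_val G]
    rw [F, if_pos hm]
  have h2 : (⨅ u : {u // G.E v u}, step (G.wt v u.1) (val G u.1)) = step (G.wt v u0.1) (val G u0.1) :=
    le_antisymm (iInf_le _ u0) (le_iInf hmin)
  rw [h1, h2, sigma0, if_pos hm]

/-- the Max vertex-set target: vertices of infinite value -/
def good (A : Set V) (v u : V) : Prop :=
  ¬ (G.wt v u < 0) ∧ (G.wt v u = ⊤ ∨ (val G u = ⊤ ∧ (0 < G.wt v u ∨ u ∈ A)))

lemma good_mono {A B : Set V} (hAB : A ⊆ B) {v u : V} (h : good G A v u) : good G B v u :=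
  ⟨h.1, h.2.imp id (fun h2 => ⟨h2.1, h2.2.imp id (fun h3 => hAB h3)⟩)⟩

/-- attractor to positive edges within the infinite-value region -/
def attr : ℕ → Set V
  | 0 => ∅
  | k+1 => {v | val G v = ⊤ ∧
      ((G.isMin v ∧ ∀ u, G.E v u → good G (attr k) v u) ∨
       (¬ G.isMin v ∧ ∃ u, G.E v u ∧ good G (attr k) v u))}

lemma attr_mono : ∀ k, attr G k ⊆ attr G (k+1) := by
  intro k
  induction k with
  | zero => exact fun v hv => absurd hv (Set.notMem_empty v)
  | succ k ih =>
    intro v hv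
    obtain ⟨h1, h2⟩ := hv
    refine ⟨h1, h2.imp (fun h => ⟨h.1, fun u hu => good_mono G ih (h.2 u hu)⟩)
      (fun h => ⟨h.1, h.2.imp fun u hu => ⟨hu.1, good_mono G ih hu.2⟩⟩)⟩

lemma attr_le {k l : ℕ} (h : k ≤ l) : attr G k ⊆ attr G l := by
  induction l with
  | zero => rw [Nat.le_zero.mp h]
  | succ l ih =>
    rcases Nat.lt_or_ge k (l+1) with h' | h'
    · exact fun v hv => attr_mono G l (ih (by omega) hv)
    · have : k = l + 1 := by omega
      rw [this]

-- facts about the infinite-value region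
lemma T_min_edge (v : V) (hm : G.isMin v) (hT : val G v = ⊤) (u : V) (hu : G.E v u) :
    ¬ (G.wt v u < 0) ∧ (G.wt v u = ⊤ ∨ val G u = ⊤) := by
  have h1 : (⊤:ℕ∞) ≤ step (G.wt v u) (val G u) := by
    rw [← hT]
    exact val_min_edge_le G v hm u hu
  have h2 : step (G.wt v u) (val G u) = ⊤ := top_le_iff.mp h1
  by_cases hneg : G.wt v u < 0
  · rw [step_of_neg hneg] at h2; exact absurd h2 (by simp)
  · rw [step_of_nonneg hneg] at h2
    refine ⟨hneg, ?_⟩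
    rcases WithTop.add_eq_top.mp h2 with h | h
    · exact Or.inl (wToN_eq_top.mp h)
    · exact Or.inr h

lemma T_max_edge (v : V) (hm : ¬ G.isMin v) (hT : val G v = ⊤) :
    ∃ u, G.E v u ∧ ¬ (G.wt v u < 0) ∧ (G.wt v u = ⊤ ∨ val G u = ⊤) := by
  have h1 : (⨆ u : {u // G.E v u}, step (G.wt v u.1) (val G u.1)) = ⊤ := by
    rw [← hT]
    conv_rhs => rw [← F_val G]
    rw [F, if_neg hm]
  obtain ⟨u0, hu0⟩ := Finite.exists_max (fun u : {u // G.E v u} => step (G.wt v u.1) (val G u.1))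
  have hsup : (⨆ u : {u // G.E v u}, step (G.wt v u.1) (val G u.1))
      = step (G.wt v u0.1) (val G u0.1) :=
    le_antisymm (iSup_le hu0) (le_iSup (fun u : {u // G.E v u} => step (G.wt v u.1) (val G u.1)) u0)
  have h2 : step (G.wt v u0.1) (val G u0.1) = ⊤ := by rw [← hsup]; exact h1
  by_cases hneg : G.wt v u0.1 < 0
  · rw [step_of_neg hneg] at h2; exact absurd h2 (by simp)
  · rw [step_of_nonneg hneg] at h2
    exact ⟨u0.1, u0.2, hneg, (WithTop.add_eq_top.mp h2).imp (fun h => wToN_eq_top.mp h) id⟩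

end EnPP
namespace EnPP
open Game

variable {V : Type} [Fintype V] (G : Game V (WithTop ℤ))

lemma wt_eq_zero {w : WithTop ℤ} (h1 : ¬ w < 0) (h2 : ¬ 0 < w) : w = 0 :=
  le_antisymm (not_lt.mp h2) (not_lt.mp h1)

lemma finsup_ne_top {α : Type} [Fintype α] (f : α → ℕ∞) (h : ∀ a, f a ≠ ⊤) :
    Finset.univ.sup f ≠ ⊤ := by
  have hlt : Finset.univ.sup f < ⊤ := by
    rw [Finset.sup_lt_iff (by simp : (⊥:ℕ∞) < ⊤)]
    exact fun a _ => lt_top_iff_ne_top.mpr (h a)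
  exact lt_top_iff_ne_top.mp hlt

lemma T_subset_attr (v : V) (hT : val G v = ⊤) : ∃ k, v ∈ attr G k := by
  by_contra hc
  push_neg at hc
  set Z : Set V := {w | val G w = ⊤ ∧ ∀ k, w ∉ attr G k} with hZdef
  have hvZ : v ∈ Z := ⟨hT, hc⟩
  set β : ℕ∞ := Finset.univ.sup (fun u => if val G u = ⊤ then 0 else val G u) with hβ
  set γ : ℕ∞ := Finset.univ.sup
    (fun p : V × V => if G.wt p.1 p.2 = ⊤ then 0 else wToN (G.wt p.1 p.2)) with hγ
  have hβtop : β ≠ ⊤ := finsup_ne_top _ (fun a => by split <;> simp_all)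
  have hγtop : γ ≠ ⊤ := finsup_ne_top _ (fun p => by
    split
    · simp
    · next h => exact fun ht => h (wToN_eq_top.mp ht))
  have hC : γ + β ≠ ⊤ := WithTop.add_ne_top.mpr ⟨hγtop, hβtop⟩
  set x : V → ℕ∞ := fun u => if u ∈ Z then γ + β else val G u with hx
  have hxZ : ∀ u, u ∈ Z → x u = γ + β := fun u hu => if_pos hu
  have hxN : ∀ u, u ∉ Z → x u = val G u := fun u hu => if_neg hu
  have hxval : ∀ u, x u ≤ val G u := by
    intro u
    by_cases hu : u ∈ Z
    · rw [hxZ u hu, hu.1]; exact le_top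
    · rw [hxN u hu]
  -- edges from Max vertices in Z are never good
  have hmaxZ : ∀ w ∈ Z, ¬ G.isMin w → ∀ u, G.E w u → ∀ k, ¬ good G (attr G k) w u := by
    intro w hw hm u hu k hk
    exact (hw.2 (k+1)) ⟨hw.1, Or.inr ⟨hm, u, hu, hk⟩⟩
  -- Min vertices in Z have an edge that is never good, hence a zero-weight edge into Z
  have hminZ : ∀ w ∈ Z, G.isMin w → ∃ u, G.E w u ∧ G.wt w u = 0 ∧ u ∈ Z := by
    intro w hw hm
    have hbad : ∃ u, G.E w u ∧ ∀ k, ¬ good G (attr G k) w u := by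
      by_contra hgood
      push_neg at hgood
      have hch : ∀ u : {u // G.E w u}, ∃ k, good G (attr G k) w u.1 := by
        intro u
        obtain ⟨k, hk⟩ := hgood u.1 u.2
        exact ⟨k, hk⟩
      choose f hf using hch
      obtain ⟨u1, hu1⟩ := Finite.exists_max f
      have hall : ∀ u, G.E w u → good G (attr G (f u1)) w u := by
        intro u hu
        exact good_mono G (attr_le G (hu1 ⟨u, hu⟩)) (hf ⟨u, hu⟩)
      exact (hw.2 (f u1 + 1)) ⟨hw.1, Or.inl ⟨hm, hall⟩⟩
    obtain ⟨u, hu, hng⟩ := hbad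
    obtain ⟨hneg, hdis⟩ := T_min_edge G w hm hw.1 u hu
    have hwt : G.wt w u ≠ ⊤ := by
      intro htop
      exact hng 0 ⟨hneg, Or.inl htop⟩
    have hvalu : val G u = ⊤ := hdis.resolve_left hwt
    have hnp : ¬ 0 < G.wt w u := by
      intro hpos
      exact hng 0 ⟨hneg, Or.inr ⟨hvalu, Or.inl hpos⟩⟩
    have hnm : ∀ k, u ∉ attr G k := by
      intro k hk
      exact hng k ⟨hneg, Or.inr ⟨hvalu, Or.inr hk⟩⟩
    exact ⟨u, hu, wt_eq_zero hneg hnp, hvalu, hnm⟩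
  -- x is a prefixed point of F
  have hpre : ∀ u, F G x u ≤ x u := by
    intro w
    by_cases hwZ : w ∈ Z
    · rw [hxZ w hwZ]
      by_cases hm : G.isMin w
      · obtain ⟨u, hu, hwt0, huZ⟩ := hminZ w hwZ hm
        refine le_trans (min_edge_le G w hm u hu x) ?_
        rw [step_of_nonneg (by rw [hwt0]; exact lt_irrefl 0) _, hwt0, wToN_zero, zero_add,
          hxZ u huZ]
      · rw [F, if_neg hm]
        refine iSup_le fun u => ?_
        have hng := hmaxZ w hwZ hm u.1 u.2 0
        by_cases hneg : G.wt w u.1 < 0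
        · rw [step_of_neg hneg]; exact zero_le
        · have h1 : ¬ (G.wt w u.1 = ⊤ ∨ (val G u.1 = ⊤ ∧ (0 < G.wt w u.1 ∨ u.1 ∈ attr G 0))) := by
            intro hor
            exact hng ⟨hneg, hor⟩
          push_neg at h1
          obtain ⟨hwt, h2⟩ := h1
          rw [step_of_nonneg hneg]
          by_cases hvu : val G u.1 = ⊤
          · have hnp : ¬ 0 < G.wt w u.1 := by
              intro hpos
              exact hmaxZ w hwZ hm u.1 u.2 0 ⟨hneg, Or.inr ⟨hvu, Or.inl hpos⟩⟩
            have hz0 : G.wt w u.1 = 0 := wt_eq_zero hneg hnp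
            have huZ : u.1 ∈ Z := ⟨hvu, fun k hk =>
              hmaxZ w hwZ hm u.1 u.2 k ⟨hneg, Or.inr ⟨hvu, Or.inr hk⟩⟩⟩
            rw [hz0, wToN_zero, zero_add, hxZ u.1 huZ]
          · rw [hxN u.1 (fun hz => hvu (hz.1))]
            refine add_le_add ?_ ?_
            · calc wToN (G.wt w u.1)
                  = (if G.wt w u.1 = ⊤ then 0 else wToN (G.wt w u.1)) := by rw [if_neg hwt]
                _ ≤ γ := by
                    rw [hγ]
                    exact Finset.le_sup (f := fun p : V × V =>
                      if G.wt p.1 p.2 = ⊤ then 0 else wToN (G.wt p.1 p.2))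
                      (Finset.mem_univ (w, u.1))
            · calc val G u.1 = (if val G u.1 = ⊤ then 0 else val G u.1) := by rw [if_neg hvu]
                _ ≤ β := by
                    rw [hβ]
                    exact Finset.le_sup (f := fun u => if val G u = ⊤ then 0 else val G u)
                      (Finset.mem_univ u.1)
    · rw [hxN w hwZ]
      calc F G x w ≤ F G (val G) w := F_mono G hxval w
        _ = val G w := by rw [F_val G]
  have hle := val_le_of_prefixed G x hpre v
  rw [hT, hxZ v hvZ] at hle
  exact hC (top_le_iff.mp hle)

end EnPP
namespace EnPP
open Game

variable {V : Type} [Fintype V] (G : Game V (WithTop ℤ))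

def rankT (v : V) : ℕ :=
  if h : ∃ k, v ∈ attr G k then Nat.find h else 0

lemma rankT_le (v : V) {k : ℕ} (h : v ∈ attr G k) : rankT G v ≤ k := by
  rw [rankT, dif_pos ⟨k, h⟩]
  exact Nat.find_le h

lemma exists_good_edge (v : V) (hm : ¬ G.isMin v) (hT : val G v = ⊤) :
    ∃ u, G.E v u ∧ good G (attr G (rankT G v - 1)) v u := by
  have h : ∃ k, v ∈ attr G k := T_subset_attr G v hT
  have hrT : rankT G v = Nat.find h := dif_pos h
  have hmem : v ∈ attr G (Nat.find h) := Nat.find_spec h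
  have hne : Nat.find h ≠ 0 := by
    intro h0
    rw [h0] at hmem
    exact absurd hmem (Set.notMem_empty v)
  have hk : Nat.find h = (Nat.find h - 1) + 1 := by omega
  rw [hk] at hmem
  obtain ⟨_, hdis⟩ := hmem
  obtain ⟨_, hex⟩ := hdis.resolve_left (fun hmin => hm hmin.1)
  obtain ⟨u, hu, hg⟩ := hex
  refine ⟨u, hu, ?_⟩
  rw [hrT]
  exact hg

/-- the optimal Max strategy -/
def tau0 (v : V) : V :=
  if hm : G.isMin v then (G.nosink v).choose
  else if hT : val G v = ⊤ then (exists_good_edge G v hm hT).choose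
  else if _h0 : val G v = 0 then (G.nosink v).choose
  else ((Finite.exists_max (fun u : {u // G.E v u} =>
    step (G.wt v u.1) (vseq G (rank G v - 1) u.1))).choose : {u // G.E v u}).1

lemma tau0_edge (v : V) : G.E v (tau0 G v) := by
  rw [tau0]
  split
  · exact (G.nosink v).choose_spec
  · split
    · next hm hT => exact (exists_good_edge G v hm hT).choose_spec.1
    · split
      · exact (G.nosink v).choose_spec
      · exact ((Finite.exists_max (fun u : {u // G.E v u} =>
          step (G.wt v u.1) (vseq G (rank G v - 1) u.1))).choose).2

lemma tau0_good (v : V) (hm : ¬ G.isMin v) (hT : val G v = ⊤) :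
    good G (attr G (rankT G v - 1)) v (tau0 G v) := by
  rw [tau0, dif_neg hm, dif_pos hT]
  exact (exists_good_edge G v hm hT).choose_spec.2

lemma max_edge_opt (v : V) (hm : ¬ G.isMin v) (h0 : val G v ≠ 0) (hT : val G v ≠ ⊤) :
    ¬ (G.wt v (tau0 G v) < 0) ∧
      val G v = wToN (G.wt v (tau0 G v)) + val G (tau0 G v) ∧
      rank G (tau0 G v) < rank G v := by
  have hr1 : 1 ≤ rank G v := rank_pos G v h0 hT
  have hmax := (Finite.exists_max (fun u : {u // G.E v u} =>
    step (G.wt v u.1) (vseq G (rank G v - 1) u.1))).choose_spec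
  set u0 : {u // G.E v u} := (Finite.exists_max (fun u : {u // G.E v u} =>
    step (G.wt v u.1) (vseq G (rank G v - 1) u.1))).choose with hu0
  have htau : tau0 G v = u0.1 := by
    rw [tau0, dif_neg hm, dif_neg hT, dif_neg h0]
  rw [htau]
  have hval_r : val G v = vseq G (rank G v) v := (rank_spec G v hT).symm
  have hFr : vseq G (rank G v) v = F G (vseq G (rank G v - 1)) v := by
    conv_lhs => rw [show rank G v = (rank G v - 1) + 1 by omega]
    rfl
  have hsup : F G (vseq G (rank G v - 1)) v = step (G.wt v u0.1) (vseq G (rank G v - 1) u0.1) := by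
    rw [F, if_neg hm]
    exact le_antisymm (iSup_le hmax)
      (le_iSup (fun u : {u // G.E v u} => step (G.wt v u.1) (vseq G (rank G v - 1) u.1)) u0)
  have heq : val G v = step (G.wt v u0.1) (vseq G (rank G v - 1) u0.1) := by
    rw [hval_r, hFr, hsup]
  have hneg : ¬ (G.wt v u0.1 < 0) := by
    intro hneg
    rw [step_of_neg hneg] at heq
    exact h0 heq
  rw [step_of_nonneg hneg] at heq
  have hwt : wToN (G.wt v u0.1) ≠ ⊤ := by
    intro hw
    rw [hw] at heq
    exact hT (by rw [heq]; simp)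
  have hup : wToN (G.wt v u0.1) + val G u0.1 ≤ val G v := by
    have := val_max_edge_ge G v hm u0.1 u0.2
    rwa [step_of_nonneg hneg] at this
  have hdown : wToN (G.wt v u0.1) + val G u0.1 ≥ val G v := by
    rw [heq]
    exact add_le_add_right (vseq_le_val G _ _) _
  have hvv : val G v = wToN (G.wt v u0.1) + val G u0.1 := le_antisymm hdown hup
  have hcancel : val G u0.1 = vseq G (rank G v - 1) u0.1 :=
    WithTop.add_left_cancel hwt (hvv.symm.trans heq)
  have hrle : rank G u0.1 ≤ rank G v - 1 := rank_le G u0.1 _ hcancel.symm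
  exact ⟨hneg, hvv, by omega⟩

end EnPP
namespace EnPP
open Game

variable {V : Type} [Fintype V] (G : Game V (WithTop ℤ))

/-- the optimal strategies, packaged -/
def sigma0S : G.MinStrat := ⟨sigma0 G, fun v _ => sigma0_edge G v⟩
def tau0S : G.MaxStrat := ⟨tau0 G, fun v _ => tau0_edge G v⟩

lemma min_guarantee (π : ℕ → V) (hp : G.IsPath π) (hc : G.ConsMin (sigma0S G) π) :
    EnP (G.wseq π) ≤ val G (π 0) := by
  have hstep : ∀ k, ¬ (G.wseq π k < 0) → wToN (G.wseq π k) + val G (π (k+1)) ≤ val G (π k) := by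
    intro k hneg
    have hneg' : ¬ (G.wt (π k) (π (k+1)) < 0) := hneg
    by_cases hm : G.isMin (π k)
    · have h1 : π (k+1) = sigma0 G (π k) := hc k hm
      have h2 := val_sigma0 G (π k) hm
      rw [← h1] at h2
      rw [step_of_nonneg hneg'] at h2
      exact le_of_eq h2.symm
    · have h3 := val_max_edge_ge G (π k) hm (π (k+1)) (hp k)
      rwa [step_of_nonneg hneg'] at h3
  have hinv : ∀ k, (∀ i < k, ¬ (G.wseq π i < 0)) →
      (∑ i ∈ Finset.range k, wToN (G.wseq π i)) + val G (π k) ≤ val G (π 0) := by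
    intro k
    induction k with
    | zero => intro _; simp
    | succ k ih =>
      intro h
      have h1 := ih (fun i hi => h i (by omega))
      have h2 := hstep k (h k (by omega))
      calc (∑ i ∈ Finset.range (k+1), wToN (G.wseq π i)) + val G (π (k+1))
          = (∑ i ∈ Finset.range k, wToN (G.wseq π i))
              + (wToN (G.wseq π k) + val G (π (k+1))) := by
            rw [Finset.sum_range_succ, add_assoc]
        _ ≤ (∑ i ∈ Finset.range k, wToN (G.wseq π i)) + val G (π k) := add_le_add_right h2 _
        _ ≤ val G (π 0) := h1
  by_cases hn : ∃ k, G.wseq π k < 0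
  · rw [EnP_of_neg hn]
    exact le_trans le_self_add (hinv (Nat.find hn) (fun i hi => Nat.find_min hn hi))
  · rw [EnP_of_nonneg hn]
    push_neg at hn
    exact iSup_le fun k => le_trans le_self_add (hinv k (fun i _ => not_lt.mpr (hn i)))

lemma round (k : ℕ) : ∀ (π : ℕ → V), G.IsPath π → G.ConsMax (tau0S G) π → π 0 ∈ attr G k →
    ∃ t, (∀ i ≤ t, ¬ (G.wseq π i < 0)) ∧ 0 < G.wseq π t ∧
      (G.wseq π t = ⊤ ∨ val G (π (t+1)) = ⊤) := by
  induction k with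
  | zero => intro π _ _ h; exact absurd h (Set.notMem_empty _)
  | succ k ih =>
    intro π hp hc hmem
    have hT : val G (π 0) = ⊤ := hmem.1
    have hgood : good G (attr G k) (π 0) (π 1) := by
      rcases hmem.2 with ⟨hm, hall⟩ | ⟨hm, _⟩
      · exact hall (π 1) (hp 0)
      · have h1 : π 1 = tau0 G (π 0) := hc 0 hm
        have h2 := tau0_good G (π 0) hm hT
        rw [← h1] at h2
        have h3 : rankT G (π 0) - 1 ≤ k := by
          have := rankT_le G (π 0) hmem
          omega
        exact good_mono G (attr_le G h3) h2
    obtain ⟨hneg, hor⟩ := hgood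
    rcases hor with htop | ⟨hvalT, hpos | hmemk⟩
    · refine ⟨0, ?_, ?_, Or.inl htop⟩
      · intro i hi
        have hi0 : i = 0 := by omega
        rw [hi0]
        exact hneg
      · show (0:WithTop ℤ) < G.wt (π 0) (π 1)
        rw [htop]
        exact WithTop.coe_lt_top 0
    · exact ⟨0, fun i hi => by rw [(by omega : i = 0)]; exact hneg, hpos, Or.inr hvalT⟩
    · obtain ⟨t, h1, h2, h3⟩ := ih (fun i => π (i+1)) (fun i => hp (i+1))
        (fun i hmi => hc (i+1) hmi) hmemk
      refine ⟨t+1, ?_, h2, h3⟩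
      intro i hi
      cases i with
      | zero => exact hneg
      | succ j => exact h1 j (by omega)

lemma count (c : ℕ) : ∀ (π : ℕ → V), G.IsPath π → G.ConsMax (tau0S G) π →
    val G (π 0) = ⊤ → (c : ℕ∞) ≤ EnP (G.wseq π) := by
  induction c with
  | zero => intro π _ _ _; simp
  | succ c ih =>
    intro π hp hc hT
    obtain ⟨k, hk⟩ := T_subset_attr G (π 0) hT
    obtain ⟨t, h1, h2, h3⟩ := round G k π hp hc hk
    rcases h3 with htop | hvalT
    · rw [EnP_top_of_top (G.wseq π) t h1 htop]; exact le_top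
    · have hsplit := EnP_split (G.wseq π) (t+1) (fun i hi => h1 i (by omega))
      have hwt1 : 1 ≤ wToN (G.wseq π t) := one_le_wToN (h1 t le_rfl) h2.ne'
      have hsum : 1 ≤ ∑ i ∈ Finset.range (t+1), wToN (G.wseq π i) :=
        le_trans hwt1 (Finset.single_le_sum (f := fun i => wToN (G.wseq π i))
          (fun j _ => zero_le) (Finset.self_mem_range_succ t))
      have hshift : (c:ℕ∞) ≤ EnP (fun j => G.wseq π (t+1+j)) :=
        ih (fun i => π (t+1+i)) (fun i => hp (t+1+i)) (fun i hmi => hc (t+1+i) hmi) hvalT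
      calc ((c+1:ℕ):ℕ∞) = 1 + (c:ℕ∞) := by push_cast; ring
        _ ≤ (∑ i ∈ Finset.range (t+1), wToN (G.wseq π i)) + EnP (fun j => G.wseq π (t+1+j)) :=
            add_le_add hsum hshift
        _ = EnP (G.wseq π) := hsplit.symm

lemma topval_guarantee (π : ℕ → V) (hp : G.IsPath π) (hc : G.ConsMax (tau0S G) π)
    (hT : val G (π 0) = ⊤) : EnP (G.wseq π) = ⊤ :=
  ENat.eq_top_of_forall_le _ (fun c => count G c π hp hc hT)

lemma max_guarantee (π : ℕ → V) (hp : G.IsPath π) (hc : G.ConsMax (tau0S G) π) :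
    val G (π 0) ≤ EnP (G.wseq π) := by
  by_cases hT0 : val G (π 0) = ⊤
  · rw [topval_guarantee G π hp hc hT0]; exact le_top
  by_cases h00 : val G (π 0) = 0
  · rw [h00]; exact zero_le
  have hstep : ∀ i, val G (π i) ≠ 0 → val G (π i) ≠ ⊤ →
      ¬ (G.wt (π i) (π (i+1)) < 0) ∧
        val G (π i) ≤ wToN (G.wt (π i) (π (i+1))) + val G (π (i+1)) := by
    intro i h0i hTi
    by_cases hm : G.isMin (π i)
    · have h1 := val_min_edge_le G (π i) hm (π (i+1)) (hp i)
      by_cases hneg : G.wt (π i) (π (i+1)) < 0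
      · rw [step_of_neg hneg] at h1
        exact absurd (show val G (π i) = 0 from nonpos_iff_eq_zero.mp h1) h0i
      · rw [step_of_nonneg hneg] at h1
        exact ⟨hneg, h1⟩
    · have h6 : π (i+1) = tau0 G (π i) := hc i hm
      obtain ⟨ha, hb, _⟩ := max_edge_opt G (π i) hm h0i hTi
      rw [h6]
      exact ⟨ha, le_of_eq hb⟩
  by_cases hK : ∃ k, val G (π k) = 0 ∨ val G (π k) = ⊤
  · have hKspec := Nat.find_spec hK
    set K := Nat.find hK with hKdef
    have hbefore : ∀ i < K, val G (π i) ≠ 0 ∧ val G (π i) ≠ ⊤ := by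
      intro i hi
      have := Nat.find_min hK hi
      push_neg at this
      exact this
    have hneg : ∀ i < K, ¬ (G.wseq π i < 0) :=
      fun i hi => (hstep i (hbefore i hi).1 (hbefore i hi).2).1
    have hinv : ∀ k, k ≤ K →
        val G (π 0) ≤ (∑ i ∈ Finset.range k, wToN (G.wseq π i)) + val G (π k) := by
      intro k
      induction k with
      | zero => intro _; simp
      | succ k ihk =>
        intro hkK
        have h1 := ihk (by omega)
        have h2 := (hstep k (hbefore k (by omega)).1 (hbefore k (by omega)).2).2
        calc val G (π 0) ≤ (∑ i ∈ Finset.range k, wToN (G.wseq π i)) + val G (π k) := h1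
          _ ≤ (∑ i ∈ Finset.range k, wToN (G.wseq π i))
              + (wToN (G.wseq π k) + val G (π (k+1))) := add_le_add_right h2 _
          _ = (∑ i ∈ Finset.range (k+1), wToN (G.wseq π i)) + val G (π (k+1)) := by
              rw [Finset.sum_range_succ, add_assoc]
    rcases hKspec with h0' | hT'
    · have h4 := hinv K le_rfl
      rw [h0', add_zero] at h4
      exact le_trans h4 (EnP_partial_le _ K hneg)
    · have htail : EnP (fun j => G.wseq π (K + j)) = ⊤ :=
        topval_guarantee G (fun i => π (K+i)) (fun i => hp (K+i))
          (fun i hmi => hc (K+i) hmi) hT'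
      rw [EnP_split (G.wseq π) K hneg, htail, add_top]
      exact le_top
  · push_neg at hK
    have hnoneg : ∀ i, ¬ (G.wseq π i < 0) := fun i => (hstep i (hK i).1 (hK i).2).1
    by_cases hE : EnP (G.wseq π) = ⊤
    · rw [hE]; exact le_top
    exfalso
    have hzero : ∃ K, ∀ i, K ≤ i → G.wseq π i = 0 := by
      by_contra hnz
      push_neg at hnz
      have hgrow : ∀ m : ℕ, ∃ k, (m:ℕ∞) ≤ ∑ i ∈ Finset.range k, wToN (G.wseq π i) := by
        intro m
        induction m with
        | zero => exact ⟨0, by simp⟩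
        | succ m ihm =>
          obtain ⟨k, hk⟩ := ihm
          obtain ⟨i, hik, hi0⟩ := hnz k
          refine ⟨i+1, ?_⟩
          have h1 : 1 ≤ wToN (G.wseq π i) := one_le_wToN (hnoneg i) hi0
          calc ((m+1:ℕ):ℕ∞) = (m:ℕ∞) + 1 := by push_cast; ring
            _ ≤ (∑ j ∈ Finset.range k, wToN (G.wseq π j)) + wToN (G.wseq π i) :=
                add_le_add hk h1
            _ ≤ (∑ j ∈ Finset.range i, wToN (G.wseq π j)) + wToN (G.wseq π i) :=
                add_le_add_left
                  (Finset.sum_le_sum_of_subset (Finset.range_subset_range.mpr hik)) _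
            _ = ∑ j ∈ Finset.range (i+1), wToN (G.wseq π j) :=
                (Finset.sum_range_succ _ i).symm
      apply hE
      rw [EnP_of_nonneg (fun ⟨k, hk⟩ => hnoneg k hk)]
      refine ENat.eq_top_of_forall_le _ (fun m => ?_)
      obtain ⟨k, hk⟩ := hgrow m
      exact le_trans hk (le_iSup (fun k => ∑ i ∈ Finset.range k, wToN (G.wseq π i)) k)
    obtain ⟨K, hzK⟩ := hzero
    have hmono : ∀ i, K ≤ i → val G (π i) ≤ val G (π (i+1)) := by
      intro i hi
      have h2 := (hstep i (hK i).1 (hK i).2).2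
      have hz : G.wt (π i) (π (i+1)) = 0 := hzK i hi
      rwa [hz, wToN_zero, zero_add] at h2
    have hmono' : Monotone (fun j => val G (π (K + j))) :=
      monotone_nat_of_le_succ (fun j => hmono (K+j) (Nat.le_add_right K j))
    obtain ⟨N, hN⟩ := mono_finite_eventually_const _ hmono'
      (Set.Finite.subset (Set.finite_range (val G)) (by rintro _ ⟨j, rfl⟩; exact ⟨π (K+j), rfl⟩))
    have hdec : ∀ i, K + N ≤ i → rank G (π (i+1)) < rank G (π i) := by
      intro i hi
      have hzi : G.wt (π i) (π (i+1)) = 0 := hzK i (by omega)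
      have hconst : val G (π (i+1)) = val G (π i) := by
        have e1 : val G (π (K + (i - K))) = val G (π (K + N)) := hN (i-K) (by omega)
        have e2 : val G (π (K + (i+1-K))) = val G (π (K+N)) := hN (i+1-K) (by omega)
        rw [(by omega : K + (i-K) = i)] at e1
        rw [(by omega : K + (i+1-K) = i+1)] at e2
        rw [e1, e2]
      by_cases hm : G.isMin (π i)
      · have hr1 : 1 ≤ rank G (π i) := rank_pos G (π i) (hK i).1 (hK i).2
        have hle : vseq G ((rank G (π i) - 1) + 1) (π i)
            ≤ step (G.wt (π i) (π (i+1))) (vseq G (rank G (π i) - 1) (π (i+1))) :=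
          min_edge_le G (π i) hm (π (i+1)) (hp i) (vseq G (rank G (π i) - 1))
        rw [step_of_nonneg (by rw [hzi]; exact lt_irrefl 0), hzi, wToN_zero, zero_add] at hle
        rw [show (rank G (π i) - 1) + 1 = rank G (π i) by omega,
          rank_spec G (π i) (hK i).2] at hle
        have h4 : vseq G (rank G (π i) - 1) (π (i+1)) = val G (π (i+1)) :=
          le_antisymm (vseq_le_val G _ _) (by rw [hconst]; exact hle)
        have h5 := rank_le G (π (i+1)) _ h4
        omega
      · have h6 : π (i+1) = tau0 G (π i) := hc i hm
        have h7 := (max_edge_opt G (π i) hm (hK i).1 (hK i).2).2.2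
        rw [h6]
        exact h7
    have hdesc : ∀ j, rank G (π (K + N + j)) + j ≤ rank G (π (K + N)) := by
      intro j
      induction j with
      | zero => simp
      | succ j ihj =>
        have h8 := hdec (K+N+j) (by omega)
        have h9 : rank G (π (K+N+(j+1))) < rank G (π (K+N+j)) := by
          rwa [show K+N+(j+1) = K+N+j+1 by omega]
        omega
    have h10 := hdesc (rank G (π (K+N)) + 1)
    omega

end EnPP
namespace EnPP
open Game

variable {V : Type} [Fintype V] (G : Game V (WithTop ℤ))

/-- the joint play of two strategies -/
def jplay (σ : G.MinStrat) (τ : G.MaxStrat) (v : V) : ℕ → V :=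
  fun n => (fun x => if G.isMin x then σ.1 x else τ.1 x)^[n] v

lemma jplay_zero (σ : G.MinStrat) (τ : G.MaxStrat) (v : V) : jplay G σ τ v 0 = v := rfl

lemma jplay_succ (σ : G.MinStrat) (τ : G.MaxStrat) (v : V) (n : ℕ) :
    jplay G σ τ v (n+1) = (fun x => if G.isMin x then σ.1 x else τ.1 x) (jplay G σ τ v n) :=
  Function.iterate_succ_apply' _ n v

lemma jplay_path (σ : G.MinStrat) (τ : G.MaxStrat) (v : V) : G.IsPath (jplay G σ τ v) := by
  intro i
  rw [jplay_succ]
  by_cases hm : G.isMin (jplay G σ τ v i)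
  · simp only [if_pos hm]; exact σ.2 _ hm
  · simp only [if_neg hm]; exact τ.2 _ hm

lemma jplay_consMin (σ : G.MinStrat) (τ : G.MaxStrat) (v : V) :
    G.ConsMin σ (jplay G σ τ v) := by
  intro i hm
  rw [jplay_succ]
  simp only [if_pos hm]

lemma jplay_consMax (σ : G.MinStrat) (τ : G.MaxStrat) (v : V) :
    G.ConsMax τ (jplay G σ τ v) := by
  intro i hm
  rw [jplay_succ]
  simp only [if_neg hm]

end EnPP

open Game

/-- Positional determinacy of positive-energy games. -/
theorem enp_positional_determinacy {V : Type} [Fintype V] (G : Game V (WithTop ℤ)) :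
    ∃ (σ₀ : G.MinStrat) (τ₀ : G.MaxStrat), ∀ v : V,
      (⨆ π : G.PlaysMin σ₀ v, EnP (G.wseq π.1))
          = (⨅ σ : G.MinStrat, ⨆ π : G.PlaysMin σ v, EnP (G.wseq π.1)) ∧
      (⨅ σ : G.MinStrat, ⨆ π : G.PlaysMin σ v, EnP (G.wseq π.1))
          = (⨆ τ : G.MaxStrat, ⨅ π : G.PlaysMax τ v, EnP (G.wseq π.1)) ∧
      (⨆ τ : G.MaxStrat, ⨅ π : G.PlaysMax τ v, EnP (G.wseq π.1))
          = (⨅ π : G.PlaysMax τ₀ v, EnP (G.wseq π.1)) := by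
  refine ⟨EnPP.sigma0S G, EnPP.tau0S G, fun v => ?_⟩
  have h1 : (⨆ π : G.PlaysMin (EnPP.sigma0S G) v, EnP (G.wseq π.1)) ≤ EnPP.val G v :=
    iSup_le fun π => by
      have h := EnPP.min_guarantee G π.1 π.2.2.1 π.2.2.2
      rwa [π.2.1] at h
  have h2 : EnPP.val G v ≤ ⨅ π : G.PlaysMax (EnPP.tau0S G) v, EnP (G.wseq π.1) :=
    le_iInf fun π => by
      have h := EnPP.max_guarantee G π.1 π.2.2.1 π.2.2.2
      rwa [π.2.1] at h
  have h3 : (⨅ σ : G.MinStrat, ⨆ π : G.PlaysMin σ v, EnP (G.wseq π.1))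
      ≤ (⨆ π : G.PlaysMin (EnPP.sigma0S G) v, EnP (G.wseq π.1)) :=
    iInf_le (fun σ => ⨆ π : G.PlaysMin σ v, EnP (G.wseq π.1)) (EnPP.sigma0S G)
  have h4 : (⨅ π : G.PlaysMax (EnPP.tau0S G) v, EnP (G.wseq π.1))
      ≤ (⨆ τ : G.MaxStrat, ⨅ π : G.PlaysMax τ v, EnP (G.wseq π.1)) :=
    le_iSup (fun τ => ⨅ π : G.PlaysMax τ v, EnP (G.wseq π.1)) (EnPP.tau0S G)
  have h5 : (⨆ τ : G.MaxStrat, ⨅ π : G.PlaysMax τ v, EnP (G.wseq π.1))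
      ≤ (⨅ σ : G.MinStrat, ⨆ π : G.PlaysMin σ v, EnP (G.wseq π.1)) := by
    refine iSup_le fun τ => le_iInf fun σ => ?_
    have hπ := EnPP.jplay_path G σ τ v
    calc (⨅ π : G.PlaysMax τ v, EnP (G.wseq π.1))
        ≤ EnP (G.wseq (EnPP.jplay G σ τ v)) :=
          iInf_le (fun π : G.PlaysMax τ v => EnP (G.wseq π.1))
            ⟨EnPP.jplay G σ τ v, EnPP.jplay_zero G σ τ v, hπ, EnPP.jplay_consMax G σ τ v⟩
      _ ≤ (⨆ π : G.PlaysMin σ v, EnP (G.wseq π.1)) :=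
          le_iSup (fun π : G.PlaysMin σ v => EnP (G.wseq π.1))
            ⟨EnPP.jplay G σ τ v, EnPP.jplay_zero G σ τ v, hπ, EnPP.jplay_consMin G σ τ v⟩
  exact ⟨le_antisymm (h1.trans (h2.trans (h4.trans h5))) h3,
    le_antisymm (h3.trans (h1.trans (h2.trans h4))) h5,
    le_antisymm (h5.trans (h3.trans (h1.trans h2))) h4⟩
end
end

section
/- For every game G with integer weights and every vertex v, the following are equivalent: (i) MP_G(v) ≤ 0; (ii) En_G(v) < ∞; (iii) En_G(v) ≤ (n−1)·W, where n = |V| and W = max_{e ∈ E} |w(e)|. -/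
attribute [local instance] Classical.propDecidable

open Game Finset

namespace MPAux

variable {V : Type}

lemma toE_coe (n : ℤ) : toE (n : WithTop ℤ) = ((n : ℝ) : EReal) := by
  rw [toE, dif_neg WithTop.coe_ne_top]; norm_num

lemma ereal_coe_fsum {ι : Type*} (s : Finset ι) (f : ι → ℝ) :
    ((∑ i ∈ s, f i : ℝ) : EReal) = ∑ i ∈ s, ((f i : ℝ) : EReal) := by
  classical
  induction s using Finset.cons_induction with
  | empty => simp
  | cons a s ha ih => rw [Finset.sum_cons, Finset.sum_cons, EReal.coe_add, ih]

/-- Partial sums of weights along a path. -/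
def S (G : Game V ℤ) (p : ℕ → V) (k : ℕ) : ℤ :=
  ∑ m ∈ Finset.range k, G.wt (p m) (p (m + 1))

lemma S_add (G : Game V ℤ) (p : ℕ → V) (a b : ℕ) :
    S G p (a + b) = S G p a + ∑ x ∈ Finset.range b, G.wt (p (a + x)) (p (a + x + 1)) := by
  simpa [S] using Finset.sum_range_add (fun m => G.wt (p m) (p (m + 1))) a b

/-- No positive-sum cycle occurs on a play consistent with `σ`. -/
def NoPosCyc (G : Game V ℤ) (σ : G.MinStrat) (v : V) : Prop :=
  ∀ π : G.PlaysMin σ v, ∀ i d : ℕ, 0 < d → π.1 (i + d) = π.1 i →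
    (∑ m ∈ Finset.range d, G.wt (π.1 (i + m)) (π.1 (i + m + 1))) ≤ 0

/-- Cutting a cycle out of a consistent play. -/
lemma cut_lemma (G : Game V ℤ) (σ : G.MinStrat) {v : V} {p : ℕ → V} (h0 : p 0 = v)
    (hp : G.IsPath p) (hc : G.ConsMin σ p) {i d : ℕ} (hd : 0 < d) (hl : p (i + d) = p i) :
    ∃ ρ : G.PlaysMin σ v, ∀ k, i + d ≤ k →
      S G p k = S G ρ.1 (k - d) + ∑ m ∈ Finset.range d, G.wt (p (i + m)) (p (i + m + 1)) := by
  classical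
  set q : ℕ → V := fun m => if m < i then p m else p (m + d) with hq
  have hstep : ∀ m, q m = p (if m < i then m else m + d) ∧
      q (m + 1) = p ((if m < i then m else m + d) + 1) := by
    intro m
    by_cases h : m < i
    · refine ⟨by simp [hq, h], ?_⟩
      simp only [if_pos h]
      rcases Nat.lt_or_ge (m + 1) i with h1 | h1
      · simp [hq, h1]
      · have h2 : m + 1 = i := by omega
        have : q (m + 1) = p (m + 1 + d) := by simp [hq, h2]
        rw [this, h2, hl, ← h2]
    · have hm : i ≤ m := Nat.not_lt.1 h
      refine ⟨by simp [hq, h], ?_⟩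
      simp only [if_neg h]
      have : q (m + 1) = p (m + 1 + d) := by
        simp [hq, Nat.not_lt.2 (by omega : i ≤ m + 1)]
      rw [this, show m + 1 + d = m + d + 1 by omega]
  have hpath : G.IsPath q := by
    intro m
    rw [(hstep m).1, (hstep m).2]
    exact hp _
  have hcons : G.ConsMin σ q := by
    intro m hmin
    rw [(hstep m).1] at hmin
    rw [(hstep m).1, (hstep m).2]
    exact hc _ hmin
  have hq0 : q 0 = v := by
    rcases Nat.eq_zero_or_pos i with h | h
    · have : q 0 = p (0 + d) := by simp [hq, h]
      rw [this]
      subst h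
      rw [hl, h0]
    · have : q 0 = p 0 := by simp [hq, h]
      rw [this, h0]
  refine ⟨⟨q, hq0, hpath, hcons⟩, ?_⟩
  intro k hk
  have hik : i ≤ k - d := by omega
  -- weights of q
  have hwq : ∀ m, G.wt (q m) (q (m + 1)) =
      G.wt (p (if m < i then m else m + d)) (p ((if m < i then m else m + d) + 1)) := by
    intro m; rw [(hstep m).1, (hstep m).2]
  have e1 : S G q (k - d) = S G q i + ∑ x ∈ Finset.range (k - d - i),
      G.wt (q (i + x)) (q (i + x + 1)) := by
    have := S_add G q i (k - d - i)
    rwa [show i + (k - d - i) = k - d by omega] at this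
  have e2 : S G q i = S G p i := by
    apply Finset.sum_congr rfl
    intro m hm
    have hmi : m < i := Finset.mem_range.1 hm
    rw [hwq m, if_pos hmi]
  have e3 : ∀ x, G.wt (q (i + x)) (q (i + x + 1)) = G.wt (p (i + d + x)) (p (i + d + x + 1)) := by
    intro x
    rw [hwq (i + x), if_neg (by omega : ¬ i + x < i),
      show i + x + d = i + d + x by omega]
  have e4 : S G p k = S G p i + (∑ m ∈ Finset.range d, G.wt (p (i + m)) (p (i + m + 1)))
      + ∑ x ∈ Finset.range (k - d - i), G.wt (p (i + d + x)) (p (i + d + x + 1)) := by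
    have h1 := S_add G p (i + d) (k - (i + d))
    rw [show i + d + (k - (i + d)) = k by omega] at h1
    have h2 := S_add G p i d
    rw [h1, h2, show k - (i + d) = k - d - i by omega]
  rw [e4, e1, e2]
  rw [Finset.sum_congr rfl (fun x _ => e3 x)]
  ring

/-- Pumping a cycle of a consistent play forever. -/
lemma loop_lemma (G : Game V ℤ) (σ : G.MinStrat) {v : V} {p : ℕ → V} (h0 : p 0 = v)
    (hp : G.IsPath p) (hc : G.ConsMin σ p) {i d : ℕ} (hd : 0 < d) (hl : p (i + d) = p i) :
    ∃ ρ : G.PlaysMin σ v, ∀ t : ℕ,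
      S G ρ.1 (i + t * d) = S G p i
        + t * ∑ m ∈ Finset.range d, G.wt (p (i + m)) (p (i + m + 1)) := by
  classical
  set q : ℕ → V := fun m => if m < i then p m else p (i + (m - i) % d) with hq
  have hle : ∀ m, m ≤ i → q m = p m := by
    intro m hm
    rcases Nat.lt_or_ge m i with h | h
    · simp [hq, h]
    · have h2 : m = i := by omega
      subst h2
      simp [hq]
  have hkey : ∀ m, i ≤ m → q m = p (i + (m - i) % d) ∧ q (m + 1) = p (i + (m - i) % d + 1) := by
    intro m hm
    have h1 : q m = p (i + (m - i) % d) := by simp [hq, Nat.not_lt.2 hm]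
    refine ⟨h1, ?_⟩
    have h2 : q (m + 1) = p (i + (m + 1 - i) % d) := by
      simp [hq, Nat.not_lt.2 (by omega : i ≤ m + 1)]
    have h3 : m + 1 - i = (m - i) + 1 := by omega
    have hrd : (m - i) % d < d := Nat.mod_lt _ hd
    have h4 : (m - i + 1) % d = ((m - i) % d + 1) % d := by
      conv_lhs => rw [← Nat.mod_add_mod]
    rcases Nat.lt_or_ge ((m - i) % d + 1) d with h5 | h5
    · rw [h2, h3, h4, Nat.mod_eq_of_lt h5, Nat.add_assoc]
    · have h6 : (m - i) % d + 1 = d := by omega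
      rw [h2, h3, h4, h6, Nat.mod_self, Nat.add_zero,
        show i + (m - i) % d + 1 = i + d by omega, hl]
  have hstep : ∀ m, ∃ l, q m = p l ∧ q (m + 1) = p (l + 1) := by
    intro m
    rcases Nat.lt_or_ge m i with h | h
    · exact ⟨m, hle m h.le, hle (m + 1) h⟩
    · exact ⟨i + (m - i) % d, (hkey m h).1, (hkey m h).2⟩
  have hpath : G.IsPath q := by
    intro m
    obtain ⟨l, e1, e2⟩ := hstep m
    rw [e1, e2]
    exact hp _
  have hcons : G.ConsMin σ q := by
    intro m hmin
    obtain ⟨l, e1, e2⟩ := hstep m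
    rw [e1] at hmin
    rw [e1, e2]
    exact hc _ hmin
  have hq0 : q 0 = v := by rw [hle 0 (Nat.zero_le i), h0]
  refine ⟨⟨q, hq0, hpath, hcons⟩, ?_⟩
  intro t
  induction t with
  | zero =>
    norm_num
    apply Finset.sum_congr rfl
    intro m hm
    have hmi : m < i := Finset.mem_range.1 hm
    rw [hle m hmi.le, hle (m + 1) hmi]
  | succ t ih =>
    have e1 : i + (t + 1) * d = (i + t * d) + d := by ring
    rw [e1, S_add, ih]
    have e2 : ∀ x ∈ Finset.range d, G.wt (q (i + t * d + x)) (q (i + t * d + x + 1))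
        = G.wt (p (i + x)) (p (i + x + 1)) := by
      intro x hx
      have hxd : x < d := Finset.mem_range.1 hx
      have hm : i ≤ i + t * d + x := by omega
      have hmod : (i + t * d + x - i) % d = x := by
        rw [show i + t * d + x - i = x + t * d by omega, Nat.add_mul_mod_self_right, Nat.mod_eq_of_lt hxd]
      obtain ⟨e3, e4⟩ := hkey (i + t * d + x) hm
      rw [hmod] at e3 e4
      rw [e3, e4]
    rw [Finset.sum_congr rfl e2]
    push_cast
    ring


lemma wt_le_maxW [Fintype V] (G : Game V ℤ) {a b : V} (h : G.E a b) :
    G.wt a b ≤ (maxW G : ℤ) := by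
  classical
  have h1 : (G.wt a b).natAbs ≤ maxW G := by
    rw [maxW]
    have h2 : (if G.E a b then (G.wt a b).natAbs else 0) ≤ Finset.univ.sup
        (fun pr : V × V => if G.E pr.1 pr.2 then (G.wt pr.1 pr.2).natAbs else 0) :=
      Finset.le_sup (f := fun pr : V × V => if G.E pr.1 pr.2 then (G.wt pr.1 pr.2).natAbs else 0)
        (Finset.mem_univ (a, b))
    rwa [if_pos h] at h2
  omega

/-- Main bound: if no positive cycles occur, all partial sums are at most `(n-1)·W`. -/
lemma bound_lemma [Fintype V] (G : Game V ℤ) (σ : G.MinStrat) {v : V}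
    (hnc : NoPosCyc G σ v) : ∀ k, ∀ π : G.PlaysMin σ v,
    S G π.1 k ≤ (((Fintype.card V - 1) * maxW G : ℕ) : ℤ) := by
  intro k
  induction k using Nat.strong_induction_on with
  | _ k ih =>
    intro π
    obtain ⟨p, h0, hp, hc⟩ := π
    show S G p k ≤ _
    have hcard : 0 < Fintype.card V := Fintype.card_pos_iff.2 ⟨v⟩
    by_cases hk : k < Fintype.card V
    · calc S G p k ≤ ∑ m ∈ Finset.range k, (maxW G : ℤ) :=
            Finset.sum_le_sum (fun m _ => wt_le_maxW G (hp m))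
        _ = (k : ℤ) * (maxW G : ℤ) := by
            rw [Finset.sum_const, Finset.card_range]; push_cast; ring
        _ ≤ (((Fintype.card V - 1) * maxW G : ℕ) : ℤ) := by
            have h1 : k * maxW G ≤ (Fintype.card V - 1) * maxW G :=
              Nat.mul_le_mul_right _ (by omega)
            exact_mod_cast h1
    · have hlt : Fintype.card V < Fintype.card (Fin (Fintype.card V + 1)) := by simp
      obtain ⟨a, b, hab, he⟩ := Fintype.exists_ne_map_eq_of_card_lt
        (fun m : Fin (Fintype.card V + 1) => p m.1) hlt
      have hab' : a.1 ≠ b.1 := fun h => hab (Fin.ext h)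
      set i := min a.1 b.1 with hi
      set j := max a.1 b.1 with hj
      have hij : i < j := by omega
      have hjk : j ≤ k := by
        have := b.2
        have := a.2
        omega
      have hpij : p j = p i := by
        rcases Nat.le_total a.1 b.1 with h | h
        · rw [show i = a.1 by omega, show j = b.1 by omega]; exact he.symm
        · rw [show i = b.1 by omega, show j = a.1 by omega]; exact he
      set d := j - i with hdd
      have hd : 0 < d := by omega
      have hl : p (i + d) = p i := by rw [show i + d = j by omega]; exact hpij
      have hcyc : (∑ m ∈ Finset.range d, G.wt (p (i + m)) (p (i + m + 1))) ≤ 0 :=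
        hnc ⟨p, h0, hp, hc⟩ i d hd hl
      obtain ⟨ρ, hρ⟩ := cut_lemma G σ h0 hp hc hd hl
      have h1 := hρ k (by omega)
      have h2 := ih (k - d) (by omega) ρ
      omega


/-- The value of strategy `σ` for energy, in partial-sum form. -/
noncomputable def supEn (G : Game V ℤ) (σ : G.MinStrat) (v : V) : EReal :=
  ⨆ π : G.PlaysMin σ v, ⨆ k : ℕ, (((S G π.1 k : ℤ) : ℝ) : EReal)

/-- The value of strategy `σ` for mean payoff. -/
noncomputable def supMP (G : Game V ℤ) (σ : G.MinStrat) (v : V) : EReal :=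
  ⨆ π : G.PlaysMin σ v, MPv (G.wseq π.1)

lemma en_eq (G : Game V ℤ) (p : ℕ → V) :
    En (fun i => toE ((liftZ G).wseq p i)) = ⨆ k : ℕ, (((S G p k : ℤ) : ℝ) : EReal) := by
  rw [En]
  apply iSup_congr
  intro k
  calc ∑ i ∈ Finset.range k, toE ((liftZ G).wseq p i)
      = ∑ i ∈ Finset.range k, (((G.wt (p i) (p (i + 1)) : ℤ) : ℝ) : EReal) :=
        Finset.sum_congr rfl (fun i _ => toE_coe _)
    _ = ((∑ i ∈ Finset.range k, ((G.wt (p i) (p (i + 1)) : ℤ) : ℝ) : ℝ) : EReal) :=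
        (ereal_coe_fsum _ _).symm
    _ = (((S G p k : ℤ) : ℝ) : EReal) := by
        congr 1
        rw [S]
        push_cast
        ring

lemma enval_eq (G : Game V ℤ) (v : V) :
    EnVal (liftZ G) v = ⨅ σ : G.MinStrat, supEn G σ v := by
  have h : EnVal (liftZ G) v = ⨅ σ : G.MinStrat, ⨆ π : G.PlaysMin σ v,
      En (fun i => toE ((liftZ G).wseq π.1 i)) := rfl
  rw [h]
  exact iInf_congr (fun σ => iSup_congr (fun π => en_eq G π.1))

lemma mpval_eq (G : Game V ℤ) (v : V) :
    MPVal G v = ⨅ σ : G.MinStrat, supMP G σ v := rfl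

lemma mpv_eq (G : Game V ℤ) (p : ℕ → V) :
    MPv (G.wseq p) = Filter.limsup
      (fun k : ℕ => ((((S G p k : ℤ) : ℝ) / (k : ℝ) : ℝ) : EReal)) Filter.atTop := rfl

/-- If partial sums are bounded above, the mean payoff is at most 0. -/
lemma mp_le_zero_of_bounded (G : Game V ℤ) (p : ℕ → V) (r : ℝ)
    (h : ∀ k, ((S G p k : ℤ) : ℝ) ≤ r) : MPv (G.wseq p) ≤ 0 := by
  rw [mpv_eq]
  have hle : Filter.limsup
      (fun k : ℕ => ((((S G p k : ℤ) : ℝ) / (k : ℝ) : ℝ) : EReal)) Filter.atTop ≤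
      Filter.limsup (fun k : ℕ => ((max r 0 / (k : ℝ) : ℝ) : EReal)) Filter.atTop := by
    apply Filter.limsup_le_limsup
    · filter_upwards [Filter.eventually_ge_atTop 1] with k hk
      apply EReal.coe_le_coe_iff.2
      have hk0 : (0 : ℝ) ≤ (k : ℝ) := by positivity
      gcongr
      exact (h k).trans (le_max_left r 0)
    · isBoundedDefault
    · isBoundedDefault
  have h0 : Filter.limsup (fun k : ℕ => ((max r 0 / (k : ℝ) : ℝ) : EReal)) Filter.atTop = 0 := by
    apply Filter.Tendsto.limsup_eq
    have h2 := EReal.tendsto_coe.2 (tendsto_const_div_atTop_nhds_zero_nat (max r 0))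
    simpa using h2
  exact hle.trans h0.le

lemma en_top_of_not (G : Game V ℤ) (σ : G.MinStrat) (v : V) (h : ¬ NoPosCyc G σ v) :
    supEn G σ v = ⊤ := by
  rw [NoPosCyc] at h
  push_neg at h
  obtain ⟨π, i, d, hd, hl, hcyc⟩ := h
  obtain ⟨ρ, hρ⟩ := loop_lemma G σ π.2.1 π.2.2.1 π.2.2.2 hd hl
  set C := ∑ m ∈ Finset.range d, G.wt (π.1 (i + m)) (π.1 (i + m + 1)) with hC
  have hC1 : 1 ≤ C := hcyc
  have h1 : (⨆ k : ℕ, (((S G ρ.1 k : ℤ) : ℝ) : EReal)) = ⊤ := by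
    rw [iSup_eq_top]
    intro b hb
    induction b with
    | bot => exact ⟨0, EReal.bot_lt_coe _⟩
    | top => exact absurd hb (lt_irrefl _)
    | coe r =>
      set A : ℝ := ((S G π.1 i : ℤ) : ℝ) with hA
      obtain ⟨t, ht⟩ := exists_nat_gt (r + |A| - A)
      refine ⟨i + t * d, ?_⟩
      rw [hρ t]
      apply EReal.coe_lt_coe_iff.2
      push_cast
      have h2 : (t : ℝ) ≤ (t : ℝ) * (C : ℝ) := by
        apply le_mul_of_one_le_right (by positivity)
        exact_mod_cast hC1
      have h3 : -|A| ≤ A := neg_abs_le A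
      push_cast [hA] at ht h3 ⊢
      linarith [abs_nonneg ((S G π.1 i : ℤ) : ℝ)]
  apply top_unique
  calc (⊤ : EReal) = ⨆ k : ℕ, (((S G ρ.1 k : ℤ) : ℝ) : EReal) := h1.symm
    _ ≤ supEn G σ v := le_iSup (fun π : G.PlaysMin σ v => ⨆ k : ℕ, (((S G π.1 k : ℤ) : ℝ) : EReal)) ρ

lemma mp_not_le_of_not (G : Game V ℤ) (σ : G.MinStrat) (v : V) (h : ¬ NoPosCyc G σ v) :
    ¬ (supMP G σ v ≤ 0) := by
  rw [NoPosCyc] at h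
  push_neg at h
  obtain ⟨π, i, d, hd, hl, hcyc⟩ := h
  obtain ⟨ρ, hρ⟩ := loop_lemma G σ π.2.1 π.2.2.1 π.2.2.2 hd hl
  set C := ∑ m ∈ Finset.range d, G.wt (π.1 (i + m)) (π.1 (i + m + 1)) with hC
  have hC1 : 1 ≤ C := hcyc
  set A : ℤ := S G π.1 i with hA
  intro hle
  simp only [supMP] at hle
  have h1 : MPv (G.wseq ρ.1) ≤ 0 :=
    le_trans (le_iSup (fun π : G.PlaysMin σ v => MPv (G.wseq π.1)) ρ) hle
  rw [mpv_eq] at h1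
  have hfreq : ((1 / (2 * (d : ℝ)) : ℝ) : EReal) ≤ Filter.limsup
      (fun k : ℕ => ((((S G ρ.1 k : ℤ) : ℝ) / (k : ℝ) : ℝ) : EReal)) Filter.atTop := by
    apply Filter.le_limsup_of_frequently_le
    have htend : Filter.Tendsto (fun t : ℕ => i + t * d) Filter.atTop Filter.atTop := by
      apply Filter.tendsto_atTop_mono (fun t => ?_) Filter.tendsto_id
      calc (t : ℕ) = t * 1 := (Nat.mul_one t).symm
        _ ≤ t * d := Nat.mul_le_mul_left t hd
        _ ≤ i + t * d := Nat.le_add_left _ _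
    apply htend.frequently
    apply Filter.Eventually.frequently
    filter_upwards [Filter.eventually_ge_atTop (i + 2 * d * A.natAbs + 1)] with t ht
    rw [hρ t]
    apply EReal.coe_le_coe_iff.2
    have hden : (0 : ℝ) < ((i + t * d : ℕ) : ℝ) := by
      have : 1 ≤ i + t * d := by
        have h4 : 1 ≤ t := by omega
        calc 1 ≤ t * d := Nat.one_le_iff_ne_zero.2 (by positivity)
          _ ≤ i + t * d := Nat.le_add_left _ _
      exact_mod_cast Nat.lt_of_lt_of_le Nat.zero_lt_one this
    rw [div_le_div_iff₀ (by positivity) hden]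
    have p1 : 2 * (d : ℝ) * t ≤ 2 * (d : ℝ) * t * (C : ℝ) := by
      apply le_mul_of_one_le_right (by positivity)
      exact_mod_cast hC1
    have p2 : (t : ℝ) ≤ (d : ℝ) * t := le_mul_of_one_le_left (by positivity)
      (by exact_mod_cast hd)
    have p3 : 2 * (d : ℝ) * (-|(A : ℝ)|) ≤ 2 * (d : ℝ) * (A : ℝ) :=
      mul_le_mul_of_nonneg_left (neg_abs_le _) (by positivity)
    have ht' : (i + 2 * d * A.natAbs + 1 : ℝ) ≤ t := by exact_mod_cast ht
    push_cast [Nat.cast_natAbs] at ht'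
    push_cast
    nlinarith [p1, p2, p3, ht']
    isBoundedDefault
  have h2 : ((1 / (2 * (d : ℝ)) : ℝ) : EReal) ≤ ((0 : ℝ) : EReal) := by
    rw [EReal.coe_zero]
    exact hfreq.trans h1
  have h3 : (1 / (2 * (d : ℝ))) ≤ 0 := EReal.coe_le_coe_iff.1 h2
  have h4 : (0 : ℝ) < 1 / (2 * (d : ℝ)) := by positivity
  linarith

lemma supEn_le_bound [Fintype V] (G : Game V ℤ) (σ : G.MinStrat) (v : V)
    (hnc : NoPosCyc G σ v) :
    supEn G σ v ≤ ((((Fintype.card V - 1) * maxW G : ℕ) : ℝ) : EReal) := by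
  apply iSup_le
  intro π
  apply iSup_le
  intro k
  apply EReal.coe_le_coe_iff.2
  exact_mod_cast bound_lemma G σ hnc k π

lemma supMP_le_of_lt_top (G : Game V ℤ) (σ : G.MinStrat) (v : V)
    (h : supEn G σ v < ⊤) : supMP G σ v ≤ 0 := by
  apply iSup_le
  intro π
  have hπ : (⨆ k : ℕ, (((S G π.1 k : ℤ) : ℝ) : EReal)) < ⊤ :=
    lt_of_le_of_lt (le_iSup (fun π : G.PlaysMin σ v =>
      ⨆ k : ℕ, (((S G π.1 k : ℤ) : ℝ) : EReal)) π) h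
  set B := ⨆ k : ℕ, (((S G π.1 k : ℤ) : ℝ) : EReal) with hB
  have h0 : ((0 : ℝ) : EReal) ≤ B := by
    have h1 : (((S G π.1 0 : ℤ) : ℝ) : EReal) ≤ B :=
      le_iSup (fun k : ℕ => (((S G π.1 k : ℤ) : ℝ) : EReal)) 0
    have h2 : S G π.1 0 = 0 := by simp [S]
    rw [h2] at h1
    simpa using h1
  have hBne : B ≠ ⊤ := hπ.ne
  have hBbot : B ≠ ⊥ := (lt_of_lt_of_le (EReal.bot_lt_coe 0) h0).ne'
  apply mp_le_zero_of_bounded G π.1 B.toReal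
  intro k
  have h1 : (((S G π.1 k : ℤ) : ℝ) : EReal) ≤ B :=
    le_iSup (fun k : ℕ => (((S G π.1 k : ℤ) : ℝ) : EReal)) k
  rw [← EReal.coe_toReal hBne hBbot] at h1
  exact EReal.coe_le_coe_iff.1 h1

lemma exists_min_strat [Fintype V] (G : Game V ℤ) (f : G.MinStrat → EReal) :
    ∃ σ, f σ = ⨅ τ, f τ := by
  have h1 : Nonempty G.MinStrat :=
    ⟨⟨fun u => Classical.choose (G.nosink u), fun u _ => Classical.choose_spec (G.nosink u)⟩⟩
  have h2 : Finite G.MinStrat := by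
    show Finite {σ : V → V // ∀ v, G.isMin v → G.E v (σ v)}
    exact Subtype.finite
  obtain ⟨σ, hσ⟩ := Finite.exists_min f
  exact ⟨σ, le_antisymm (le_iInf hσ) (iInf_le f σ)⟩

end MPAux

/-- Equivalence: `MP_G(v) ≤ 0 ↔ En_G(v) < ∞ ↔ En_G(v) ≤ (n−1)·W`. -/
theorem mp_en_equivalence {V : Type} [Fintype V] (G : Game V ℤ) (v : V) :
    (MPVal G v ≤ 0 ↔ EnVal (liftZ G) v < ⊤) ∧
    (EnVal (liftZ G) v < ⊤ ↔
      EnVal (liftZ G) v ≤ ((((Fintype.card V - 1) * maxW G : ℕ) : ℝ) : EReal)) := by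
  set B : EReal := ((((Fintype.card V - 1) * maxW G : ℕ) : ℝ) : EReal) with hB
  have key1 : MPVal G v ≤ 0 → EnVal (liftZ G) v ≤ B := by
    intro h
    rw [MPAux.mpval_eq] at h
    obtain ⟨σ, hσ⟩ := MPAux.exists_min_strat G (fun σ => MPAux.supMP G σ v)
    have hσ0 : MPAux.supMP G σ v ≤ 0 := by rw [hσ]; exact h
    have hnc : MPAux.NoPosCyc G σ v := by
      by_contra hn
      exact MPAux.mp_not_le_of_not G σ v hn hσ0
    rw [MPAux.enval_eq]
    exact le_trans (iInf_le (fun σ => MPAux.supEn G σ v) σ)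
      (MPAux.supEn_le_bound G σ v hnc)
  have key2 : EnVal (liftZ G) v < ⊤ → EnVal (liftZ G) v ≤ B := by
    intro h
    rw [MPAux.enval_eq] at h ⊢
    obtain ⟨σ, hσ⟩ := MPAux.exists_min_strat G (fun σ => MPAux.supEn G σ v)
    have hσt : MPAux.supEn G σ v < ⊤ := by rw [hσ]; exact h
    have hnc : MPAux.NoPosCyc G σ v := by
      by_contra hn
      rw [MPAux.en_top_of_not G σ v hn] at hσt
      exact absurd hσt (lt_irrefl _)
    exact le_trans (iInf_le (fun σ => MPAux.supEn G σ v) σ)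
      (MPAux.supEn_le_bound G σ v hnc)
  have key3 : EnVal (liftZ G) v < ⊤ → MPVal G v ≤ 0 := by
    intro h
    rw [MPAux.enval_eq] at h
    rw [MPAux.mpval_eq]
    obtain ⟨σ, hσ⟩ := MPAux.exists_min_strat G (fun σ => MPAux.supEn G σ v)
    have hσt : MPAux.supEn G σ v < ⊤ := by rw [hσ]; exact h
    exact le_trans (iInf_le (fun σ => MPAux.supMP G σ v) σ)
      (MPAux.supMP_le_of_lt_top G σ v hσt)
  have hBlt : B < ⊤ := EReal.coe_lt_top _
  exact ⟨⟨fun h => lt_of_le_of_lt (key1 h) hBlt, key3⟩,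
    ⟨key2, fun h => lt_of_le_of_lt h hBlt⟩⟩
end
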